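/- arXiv:2407.14660 — 7 statements merged into one kernel-verified Lean document; each statement's English description precedes it below -/
import Mathlib

section
/- The inverse function F_inv(x) = x^(2^n - 2) on F_{2^n} is not k-th order sum-free if and only if there exists a k-dimensional F_2-linear subspace E of F_{2^n} such that ∑_{0≠x∈E} 1/x = 0. -/
open scoped Classical

open Finset

noncomputable instance (n : ℕ) : Fintype (GaloisField 2 n) := Fintype.ofFinite _

/-- `F : F_{2^n} → F_{2^n}` is `k`-th order sum-free if it sums to a nonzero value over
every `k`-dimensional affine `F_2`-subspace (coset `v + E`). -/
def KthOrderSumFree (n k : ℕ) (F : GaloisField 2 n → GaloisField 2 n) : Prop :=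
  ∀ (v : GaloisField 2 n) (E : Submodule (ZMod 2) (GaloisField 2 n)),
    Module.finrank (ZMod 2) E = k →
      (∑ x ∈ Finset.univ.filter (fun x => x ∈ E), F (v + x)) ≠ 0

namespace SumFreeAux

variable {n : ℕ}

lemma char2 (a : GaloisField 2 n) : a + a = 0 := by
  have h : (2 : GaloisField 2 n) = 0 := CharTwo.two_eq_zero
  linear_combination a * h

/-- Decompose a subspace of dimension `k+1` as `E₀ ∪ (e + E₀)`. -/
lemma decomp (k : ℕ) (E : Submodule (ZMod 2) (GaloisField 2 n))
    (hE : Module.finrank (ZMod 2) E = k + 1) :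
    ∃ (E₀ : Submodule (ZMod 2) (GaloisField 2 n)) (e : GaloisField 2 n),
      Module.finrank (ZMod 2) E₀ = k ∧ e ∉ E₀ ∧
      ∀ x, x ∈ E ↔ (x ∈ E₀ ∨ e + x ∈ E₀) := by
  have B : Module.Basis (Fin (k + 1)) (ZMod 2) E :=
    (Module.finBasis (ZMod 2) E).reindex (finCongr hE)
  set b : Fin (k + 1) → GaloisField 2 n := fun i => (E.subtype ∘ B) i with hb
  have hli : LinearIndependent (ZMod 2) b :=
    B.linearIndependent.map' E.subtype E.ker_subtype
  have hspan : Submodule.span (ZMod 2) (Set.range b) = E := by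
    have : Set.range b = E.subtype '' Set.range B := by
      rw [hb, Set.range_comp]
    rw [this, ← Submodule.map_span, B.span_eq, Submodule.map_subtype_top]
  set e : GaloisField 2 n := b (Fin.last k) with he
  set E₀ : Submodule (ZMod 2) (GaloisField 2 n) :=
    Submodule.span (ZMod 2) (Set.range (b ∘ Fin.castSucc)) with hE₀
  have hlast : (Fin.last k) ∉ Set.range (Fin.castSucc : Fin k → Fin (k+1)) := by
    rintro ⟨j, hj⟩
    exact absurd hj (Fin.castSucc_lt_last j).ne
  have hrange : Set.range (b ∘ Fin.castSucc) = b '' Set.range (Fin.castSucc : Fin k → Fin (k+1)) := by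
    rw [Set.range_comp]
  have heE₀ : e ∉ E₀ := by
    rw [hE₀, hrange]
    exact hli.notMem_span_image hlast
  refine ⟨E₀, e, ?_, heE₀, ?_⟩
  · have : Module.finrank (ZMod 2) E₀ = Fintype.card (Fin k) :=
      finrank_span_eq_card (hli.comp Fin.castSucc (Fin.castSucc_injective k))
    simpa using this
  · have hins : Set.range b = insert e (Set.range (b ∘ Fin.castSucc)) := by
      ext y
      constructor
      · rintro ⟨i, rfl⟩
        rcases Fin.eq_castSucc_or_eq_last i with ⟨j, rfl⟩ | rfl
        · exact Set.mem_insert_of_mem _ ⟨j, rfl⟩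
        · exact Set.mem_insert _ _
      · rintro (rfl | ⟨j, rfl⟩)
        · exact ⟨Fin.last k, rfl⟩
        · exact ⟨j.castSucc, rfl⟩
    intro x
    rw [← hspan, hins, Submodule.mem_span_insert]
    constructor
    · rintro ⟨a, z, hz, rfl⟩
      have ha : a = 0 ∨ a = 1 := by
        revert a; decide
      rcases ha with rfl | rfl
      · left; simpa using hz
      · right
        rw [one_smul, ← add_assoc, char2, zero_add]
        exact hz
    · rintro (hx | hx)
      · exact ⟨0, x, hx, by simp⟩
      · exact ⟨1, e + x, hx, by rw [one_smul, ← add_assoc, char2, zero_add]⟩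

section FinsetDecomp

variable (E₀ : Submodule (ZMod 2) (GaloisField 2 n)) (e : GaloisField 2 n)
  (E : Submodule (ZMod 2) (GaloisField 2 n))

lemma mem_image_coset {x : GaloisField 2 n} :
    x ∈ (univ.filter (fun y => y ∈ E₀)).image (fun y => e + y) ↔ e + x ∈ E₀ := by
  simp only [Finset.mem_image, Finset.mem_filter, Finset.mem_univ, true_and]
  constructor
  · rintro ⟨y, hy, rfl⟩
    rwa [← add_assoc, char2, zero_add]
  · intro h
    exact ⟨e + x, h, by rw [← add_assoc, char2, zero_add]⟩

variable (he : e ∉ E₀) (hmem : ∀ x, x ∈ E ↔ (x ∈ E₀ ∨ e + x ∈ E₀))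

include he hmem in
lemma filter_decomp :
    univ.filter (fun x => x ∈ E) =
      univ.filter (fun x => x ∈ E₀) ∪ (univ.filter (fun y => y ∈ E₀)).image (fun y => e + y) := by
  ext x
  simp only [Finset.mem_union, Finset.mem_filter, Finset.mem_univ, true_and,
    mem_image_coset]
  exact hmem x

include he in
lemma filter_disjoint :
    Disjoint (univ.filter (fun x => x ∈ E₀))
      ((univ.filter (fun y => y ∈ E₀)).image (fun y => e + y)) := by
  rw [Finset.disjoint_left]
  intro x hx hx'
  rw [Finset.mem_filter] at hx
  rw [mem_image_coset] at hx'
  apply he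
  have : e = (e + x) + x := by rw [add_assoc, char2, add_zero]
  rw [this]
  exact E₀.add_mem hx' hx.2

include he hmem in
lemma prod_decomp {M : Type*} [CommMonoid M] (f : GaloisField 2 n → M) :
    ∏ x ∈ univ.filter (fun x => x ∈ E), f x =
      (∏ x ∈ univ.filter (fun x => x ∈ E₀), f x) *
      ∏ x ∈ univ.filter (fun x => x ∈ E₀), f (e + x) := by
  rw [filter_decomp E₀ e E he hmem, Finset.prod_union (filter_disjoint E₀ e he),
    Finset.prod_image]
  intro x _ y _ h
  exact add_left_cancel h

include he hmem in
lemma sum_decomp {M : Type*} [AddCommMonoid M] (f : GaloisField 2 n → M) :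
    ∑ x ∈ univ.filter (fun x => x ∈ E), f x =
      (∑ x ∈ univ.filter (fun x => x ∈ E₀), f x) +
      ∑ x ∈ univ.filter (fun x => x ∈ E₀), f (e + x) := by
  rw [filter_decomp E₀ e E he hmem, Finset.sum_union (filter_disjoint E₀ e he),
    Finset.sum_image]
  intro x _ y _ h
  exact add_left_cancel h

include he hmem in
lemma filter_ne_decomp :
    univ.filter (fun x => x ∈ E ∧ x ≠ 0) =
      univ.filter (fun x => x ∈ E₀ ∧ x ≠ 0) ∪
        (univ.filter (fun y => y ∈ E₀)).image (fun y => e + y) := by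
  ext x
  simp only [Finset.mem_union, Finset.mem_filter, Finset.mem_univ, true_and,
    mem_image_coset]
  constructor
  · rintro ⟨hxE, hx0⟩
    rcases (hmem x).1 hxE with h | h
    · exact Or.inl ⟨h, hx0⟩
    · exact Or.inr h
  · rintro (⟨h, h0⟩ | h)
    · exact ⟨(hmem x).2 (Or.inl h), h0⟩
    · refine ⟨(hmem x).2 (Or.inr h), ?_⟩
      rintro rfl
      rw [add_zero] at h
      exact he h

include he hmem in
lemma filter_ne_disjoint :
    Disjoint (univ.filter (fun x => x ∈ E₀ ∧ x ≠ 0))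
      ((univ.filter (fun y => y ∈ E₀)).image (fun y => e + y)) := by
  refine Finset.disjoint_left.mpr ?_
  intro x hx hx'
  rw [Finset.mem_filter] at hx
  rw [mem_image_coset] at hx'
  apply he
  have : e = (e + x) + x := by rw [add_assoc, char2, add_zero]
  rw [this]
  exact E₀.add_mem hx' hx.2.1

end FinsetDecomp

/-- Main induction: additivity of the subspace polynomial and the partial-fraction identity. -/
lemma key (k : ℕ) : ∀ (E : Submodule (ZMod 2) (GaloisField 2 n)),
    Module.finrank (ZMod 2) E = k →
    (∀ u w : GaloisField 2 n,
      (∏ x ∈ univ.filter (fun x => x ∈ E), (u + w + x)) =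
        (∏ x ∈ univ.filter (fun x => x ∈ E), (u + x)) +
        ∏ x ∈ univ.filter (fun x => x ∈ E), (w + x)) ∧
    (∀ v : GaloisField 2 n, v ∉ E →
      (∑ x ∈ univ.filter (fun x => x ∈ E), (v + x)⁻¹) *
        ∏ x ∈ univ.filter (fun x => x ∈ E), (v + x) =
      ∏ x ∈ univ.filter (fun x => x ∈ E ∧ x ≠ 0), x) := by
  induction k with
  | zero =>
    intro E hE
    have hbot : E = ⊥ := Submodule.finrank_eq_zero.mp hE
    subst hbot
    have h1 : univ.filter (fun x => x ∈ (⊥ : Submodule (ZMod 2) (GaloisField 2 n))) = {0} := by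
      ext x
      simp only [Finset.mem_filter, Finset.mem_univ, true_and, Submodule.mem_bot,
        Finset.mem_singleton]
    have h2 : univ.filter (fun x : GaloisField 2 n =>
        x ∈ (⊥ : Submodule (ZMod 2) (GaloisField 2 n)) ∧ x ≠ 0) = ∅ := by
      ext x
      simp only [Finset.mem_filter, Finset.mem_univ, true_and, Submodule.mem_bot,
        Finset.notMem_empty, iff_false, not_and]
      rintro rfl h
      exact h rfl
    constructor
    · intro u w
      rw [h1]
      simp
    · intro v hv
      have hv0 : v ≠ 0 := by simpa [Submodule.mem_bot] using hv
      rw [h1, h2]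
      simp [inv_mul_cancel₀ hv0]
  | succ k ih =>
    intro E hE
    obtain ⟨E₀, e, hE₀, he, hmem⟩ := decomp k E hE
    obtain ⟨ihA, ihB⟩ := ih E₀ hE₀
    have heE : e ∈ E := (hmem e).2 (Or.inr (by rw [char2]; exact E₀.zero_mem))
    set L : GaloisField 2 n → GaloisField 2 n :=
      fun v => ∏ x ∈ univ.filter (fun x => x ∈ E₀), (v + x) with hL
    have hLdec : ∀ v : GaloisField 2 n,
        (∏ x ∈ univ.filter (fun x => x ∈ E), (v + x)) = L v * L (v + e) := by
      intro v
      rw [prod_decomp E₀ e E he hmem (fun x => v + x)]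
      simp only [← add_assoc]
      rfl
    have hLadd : ∀ u w, L (u + w) = L u + L w := by
      intro u w; exact ihA u w
    have h2 : (2 : GaloisField 2 n) = 0 := CharTwo.two_eq_zero
    constructor
    · intro u w
      rw [hLdec, hLdec, hLdec]
      have h1 : L (u + w) = L u + L w := hLadd u w
      have h2' : L (u + w + e) = L u + L w + L e := by
        rw [hLadd (u + w) e, hLadd u w]
      have h3 : L (u + e) = L u + L e := hLadd u e
      have h4 : L (w + e) = L w + L e := hLadd w e
      rw [h1, h2', h3, h4]
      linear_combination (L u * L w) * h2
    · intro v hv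
      have hv₀ : v ∉ E₀ := fun h => hv ((hmem v).2 (Or.inl h))
      have hve : v + e ∉ E₀ := by
        intro h
        apply hv
        apply (hmem v).2
        right
        rwa [add_comm e v]
      set b₀ : GaloisField 2 n := ∏ x ∈ univ.filter (fun x => x ∈ E₀ ∧ x ≠ 0), x with hb₀
      have iv : (∑ x ∈ univ.filter (fun x => x ∈ E₀), (v + x)⁻¹) * L v = b₀ := ihB v hv₀
      have ive : (∑ x ∈ univ.filter (fun x => x ∈ E₀), (v + e + x)⁻¹) * L (v + e) = b₀ :=
        ihB (v + e) hve
      have hsum : (∑ x ∈ univ.filter (fun x => x ∈ E), (v + x)⁻¹) =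
          (∑ x ∈ univ.filter (fun x => x ∈ E₀), (v + x)⁻¹) +
          ∑ x ∈ univ.filter (fun x => x ∈ E₀), (v + e + x)⁻¹ := by
        rw [sum_decomp E₀ e E he hmem (fun x => (v + x)⁻¹)]
        simp only [← add_assoc]
      have hrhs : (∏ x ∈ univ.filter (fun x => x ∈ E ∧ x ≠ 0), x) = b₀ * L e := by
        rw [filter_ne_decomp E₀ e E he hmem,
          Finset.prod_union (filter_ne_disjoint E₀ e E he hmem),
          Finset.prod_image (by intro x _ y _ h; exact add_left_cancel h)]
      rw [hsum, hLdec, hrhs]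
      have hLe : L (v + e) = L v + L e := hLadd v e
      calc ((∑ x ∈ univ.filter (fun x => x ∈ E₀), (v + x)⁻¹) +
            ∑ x ∈ univ.filter (fun x => x ∈ E₀), (v + e + x)⁻¹) * (L v * L (v + e))
          = ((∑ x ∈ univ.filter (fun x => x ∈ E₀), (v + x)⁻¹) * L v) * L (v + e) +
            ((∑ x ∈ univ.filter (fun x => x ∈ E₀), (v + e + x)⁻¹) * L (v + e)) * L v := by
            ring
        _ = b₀ * L (v + e) + b₀ * L v := by rw [iv, ive]
        _ = b₀ * L e := by rw [hLe]; linear_combination (b₀ * L v) * h2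

lemma L_ne_zero (E : Submodule (ZMod 2) (GaloisField 2 n)) (v : GaloisField 2 n)
    (hv : v ∉ E) : (∏ x ∈ univ.filter (fun x => x ∈ E), (v + x)) ≠ 0 := by
  apply Finset.prod_ne_zero_iff.mpr
  intro x hx hvx
  rw [Finset.mem_filter] at hx
  apply hv
  have : v = (v + x) + x := by rw [add_assoc, char2, add_zero]
  rw [this, hvx, zero_add]
  exact hx.2

lemma coset_sum_ne_zero (k : ℕ) (E : Submodule (ZMod 2) (GaloisField 2 n))
    (hE : Module.finrank (ZMod 2) E = k) (v : GaloisField 2 n) (hv : v ∉ E) :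
    (∑ x ∈ univ.filter (fun x => x ∈ E), (v + x)⁻¹) ≠ 0 := by
  intro h0
  have hkey := ((key k E hE).2 v hv)
  rw [h0, zero_mul] at hkey
  have hne : (∏ x ∈ univ.filter (fun x => x ∈ E ∧ x ≠ 0), x) ≠ 0 := by
    apply Finset.prod_ne_zero_iff.mpr
    intro x hx
    exact ((Finset.mem_filter.mp hx).2.2)
  exact hne hkey.symm

lemma pow_eq_inv (hn : 2 ≤ n) (x : GaloisField 2 n) : x ^ (2 ^ n - 2) = x⁻¹ := by
  have hcard : Fintype.card (GaloisField 2 n) = 2 ^ n := by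
    rw [← Nat.card_eq_fintype_card]
    exact GaloisField.card 2 n (by omega)
  have h4 : 4 ≤ 2 ^ n := by
    calc (4 : ℕ) = 2 ^ 2 := by norm_num
    _ ≤ 2 ^ n := Nat.pow_le_pow_right (by norm_num) hn
  rcases eq_or_ne x 0 with rfl | hx
  · rw [zero_pow (by omega), inv_zero]
  · have h1 : x ^ (2 ^ n - 1) = 1 := by
      have := FiniteField.pow_card_sub_one_eq_one x hx
      rwa [hcard] at this
    have : x ^ (2 ^ n - 2) * x = 1 := by
      rw [← pow_succ]
      have : 2 ^ n - 2 + 1 = 2 ^ n - 1 := by omega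
      rw [this, h1]
    exact eq_inv_of_mul_eq_one_left this

lemma filter_insert_zero (E : Submodule (ZMod 2) (GaloisField 2 n)) :
    univ.filter (fun x => x ∈ E) = insert 0 (univ.filter (fun x => x ∈ E ∧ x ≠ 0)) := by
  ext x
  simp only [Finset.mem_filter, Finset.mem_univ, true_and, Finset.mem_insert]
  constructor
  · intro hx
    rcases eq_or_ne x 0 with rfl | hx0
    · exact Or.inl rfl
    · exact Or.inr ⟨hx, hx0⟩
  · rintro (rfl | ⟨hx, _⟩)
    · exact E.zero_mem
    · exact hx

end SumFreeAux

open SumFreeAux in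
/-- `F_inv(x) = x^(2^n - 2)` is not `k`-th order sum-free iff there exists a
`k`-dimensional `F_2`-linear subspace `E` of `F_{2^n}` with `∑_{0 ≠ x ∈ E} 1/x = 0`. -/
theorem not_sumFree_iff_exists_subspace (n k : ℕ) (hk : 1 ≤ k) (hkn : k ≤ n - 1) :
    ¬ KthOrderSumFree n k (fun x => x ^ (2 ^ n - 2)) ↔
      ∃ E : Submodule (ZMod 2) (GaloisField 2 n),
        Module.finrank (ZMod 2) E = k ∧
        (∑ x ∈ Finset.univ.filter (fun x => x ∈ E ∧ x ≠ 0), x⁻¹) = 0 := by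
  have hn : 2 ≤ n := by omega
  have hpow := pow_eq_inv (n := n) hn
  constructor
  · intro h
    rw [KthOrderSumFree] at h
    push_neg at h
    obtain ⟨v, E, hE, hsum⟩ := h
    simp only [hpow] at hsum
    by_cases hv : v ∈ E
    · -- translate: sum over E of (v+x)⁻¹ equals sum over E of x⁻¹
      have htrans : (∑ x ∈ univ.filter (fun x => x ∈ E), (v + x)⁻¹) =
          ∑ x ∈ univ.filter (fun x => x ∈ E), x⁻¹ := by
        apply Finset.sum_nbij' (fun x => v + x) (fun y => v + y)
        · intro a ha
          rw [Finset.mem_filter] at ha ⊢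
          exact ⟨Finset.mem_univ _, E.add_mem hv ha.2⟩
        · intro a ha
          rw [Finset.mem_filter] at ha ⊢
          exact ⟨Finset.mem_univ _, E.add_mem hv ha.2⟩
        · intro a _; rw [← add_assoc, char2, zero_add]
        · intro a _; rw [← add_assoc, char2, zero_add]
        · intro a _; rfl
      rw [htrans] at hsum
      refine ⟨E, hE, ?_⟩
      rw [filter_insert_zero E, Finset.sum_insert (by simp)] at hsum
      simpa using hsum
    · exact absurd hsum (coset_sum_ne_zero k E hE v hv)
  · rintro ⟨E, hE, hsum⟩
    intro hfree
    apply hfree 0 E hE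
    simp only [zero_add, hpow]
    rw [filter_insert_zero E, Finset.sum_insert (by simp)]
    simpa using hsum
end

section
/- If X^n + 1 has a divisor in F_2[X] of the form X^k + a_{k−1}X^{k−1} + ⋯ + a_2 X^2 + a_0 (i.e., a degree-k divisor whose coefficient of X is zero), then the inverse function F_inv on F_{2^n} is not k-th order sum-free. -/
open scoped Classical
open Polynomial

noncomputable section AuxSF

/-- Frobenius `x ↦ x^2` as a `ZMod 2`-linear endomorphism of `GaloisField 2 n`. -/
def frobSF (n : ℕ) : Module.End (ZMod 2) (GaloisField 2 n) where
  toFun x := x ^ 2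
  map_add' x y := add_pow_char x y 2
  map_smul' c x := by
    simp only [RingHom.id_apply, _root_.smul_pow]
    congr 1
    revert c; decide

lemma frobSF_pow_apply (n i : ℕ) (x : GaloisField 2 n) :
    (frobSF n ^ i) x = x ^ 2 ^ i := by
  induction i generalizing x with
  | zero => simp
  | succ i ih =>
    rw [pow_succ, Module.End.mul_apply, ih, show (frobSF n) x = x ^ 2 from rfl, ← pow_mul]
    congr 1
    rw [pow_succ, Nat.mul_comm]

/-- The linearized polynomial over `GaloisField 2 n` attached to `g ∈ F_2[X]`. -/
def linQ (n : ℕ) (g : (ZMod 2)[X]) : Polynomial (GaloisField 2 n) :=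
  ∑ i ∈ Finset.range (g.natDegree + 1),
    Polynomial.C (algebraMap (ZMod 2) (GaloisField 2 n) (g.coeff i)) * Polynomial.X ^ (2 ^ i)

lemma linQ_eval (n : ℕ) (g : (ZMod 2)[X]) (x : GaloisField 2 n) :
    (linQ n g).eval x = Polynomial.aeval (frobSF n) g x := by
  rw [Polynomial.aeval_eq_sum_range, LinearMap.coe_sum, Finset.sum_apply]
  simp only [linQ, Polynomial.eval_finset_sum, Polynomial.eval_mul, Polynomial.eval_C,
    Polynomial.eval_pow, Polynomial.eval_X, Module.End.mul_apply,
    Module.algebraMap_end_apply, frobSF_pow_apply, Algebra.smul_def]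


lemma linQ_decomp (n : ℕ) (g : (ZMod 2)[X]) (hg : g.Monic) :
    linQ n g = Polynomial.X ^ (2 ^ g.natDegree) +
      ∑ i ∈ Finset.range g.natDegree,
        Polynomial.C (algebraMap (ZMod 2) (GaloisField 2 n) (g.coeff i)) *
          Polynomial.X ^ (2 ^ i) := by
  rw [linQ, Finset.sum_range_succ, Polynomial.Monic.coeff_natDegree hg, map_one,
    Polynomial.C_1, one_mul, add_comm]

lemma linQ_tail_degree_lt (n : ℕ) (g : (ZMod 2)[X]) :
    (∑ i ∈ Finset.range g.natDegree,
        Polynomial.C (algebraMap (ZMod 2) (GaloisField 2 n) (g.coeff i)) *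
          Polynomial.X ^ (2 ^ i)).degree < ((2 ^ g.natDegree : ℕ) : WithBot ℕ) := by
  apply lt_of_le_of_lt (Polynomial.degree_sum_le _ _)
  rw [Finset.sup_lt_iff]
  · intro i hi
    refine lt_of_le_of_lt (Polynomial.degree_C_mul_X_pow_le _ _) ?_
    exact_mod_cast Nat.pow_lt_pow_right one_lt_two (Finset.mem_range.mp hi)
  · exact lt_of_lt_of_le (WithBot.bot_lt_coe 0) (by exact_mod_cast Nat.zero_le _)

lemma linQ_monic (n : ℕ) (g : (ZMod 2)[X]) (hg : g.Monic) : (linQ n g).Monic := by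
  rw [linQ_decomp n g hg]
  exact Polynomial.monic_X_pow_add (linQ_tail_degree_lt n g)

lemma linQ_tail_natDegree_lt (n : ℕ) (g : (ZMod 2)[X]) :
    (∑ i ∈ Finset.range g.natDegree,
        Polynomial.C (algebraMap (ZMod 2) (GaloisField 2 n) (g.coeff i)) *
          Polynomial.X ^ (2 ^ i)).natDegree < 2 ^ g.natDegree := by
  set T := ∑ i ∈ Finset.range g.natDegree,
        Polynomial.C (algebraMap (ZMod 2) (GaloisField 2 n) (g.coeff i)) *
          Polynomial.X ^ (2 ^ i) with hT
  rcases eq_or_ne T 0 with h0 | h0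
  · rw [h0, Polynomial.natDegree_zero]
    positivity
  · exact (Polynomial.natDegree_lt_iff_degree_lt h0).mpr (linQ_tail_degree_lt n g)

lemma linQ_natDegree (n : ℕ) (g : (ZMod 2)[X]) (hg : g.Monic) :
    (linQ n g).natDegree = 2 ^ g.natDegree := by
  rw [linQ_decomp n g hg,
    Polynomial.natDegree_add_eq_left_of_natDegree_lt
      (by rw [Polynomial.natDegree_X_pow]; exact linQ_tail_natDegree_lt n g),
    Polynomial.natDegree_X_pow]

lemma card_ker_le (n : ℕ) (g : (ZMod 2)[X]) (hg : g.Monic) :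
    Module.finrank (ZMod 2) (LinearMap.ker (Polynomial.aeval (frobSF n) g)) ≤ g.natDegree := by
  classical
  have hQm := linQ_monic n g hg
  have hQ0 : linQ n g ≠ 0 := hQm.ne_zero
  set E := LinearMap.ker (Polynomial.aeval (frobSF n) g)
  have hcard : Fintype.card E ≤ 2 ^ g.natDegree := by
    have hsub : (Finset.univ.filter (fun x => x ∈ E)) ⊆ (linQ n g).roots.toFinset := by
      intro x hx
      rw [Multiset.mem_toFinset, Polynomial.mem_roots hQ0, Polynomial.IsRoot.def, linQ_eval]
      exact LinearMap.mem_ker.mp (Finset.mem_filter.mp hx).2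
    calc Fintype.card E = (Finset.univ.filter (fun x => x ∈ E)).card := by
          rw [Fintype.card_subtype]
      _ ≤ (linQ n g).roots.toFinset.card := Finset.card_le_card hsub
      _ ≤ Multiset.card (linQ n g).roots := Multiset.toFinset_card_le _
      _ ≤ (linQ n g).natDegree := Polynomial.card_roots' _
      _ = 2 ^ g.natDegree := linQ_natDegree n g hg
  have h2 : Fintype.card E = 2 ^ Module.finrank (ZMod 2) E := by
    have := Module.card_eq_pow_finrank (K := ZMod 2) (V := E)
    rwa [ZMod.card] at this
  rw [h2] at hcard
  exact (Nat.pow_le_pow_iff_right one_lt_two).mp hcard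

end AuxSF

/-- If `X^n + 1` has a monic degree-`k` divisor in `F_2[X]` whose coefficient of `X` is
zero, then `F_inv(x) = x^(2^n - 2)` is not `k`-th order sum-free on `F_{2^n}`. -/
theorem not_sumFree_of_dvd (n k : ℕ) (hk : 2 ≤ k) (hkn : k ≤ n - 1)
    (f : (ZMod 2)[X]) (hmonic : f.Monic) (hdeg : f.natDegree = k)
    (hcoeff : f.coeff 1 = 0) (hdvd : f ∣ (X ^ n + 1 : (ZMod 2)[X])) :
    ¬ KthOrderSumFree n k (fun x => x ^ (2 ^ n - 2)) := by
  classical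
  have hn0 : n ≠ 0 := by rintro rfl; omega
  have hkn' : k < n := by omega
  have h2n : 8 ≤ 2 ^ n := by
    calc (8:ℕ) = 2 ^ 3 := by norm_num
    _ ≤ 2 ^ n := Nat.pow_le_pow_right (by norm_num) (by omega)
  have hcardF : Fintype.card (GaloisField 2 n) = 2 ^ n := by
    rw [← Nat.card_eq_fintype_card, GaloisField.card (p := 2) (n := n) hn0]
  haveI : FiniteDimensional (ZMod 2) (GaloisField 2 n) := Module.Finite.of_finite
  have hXn : (X ^ n + 1 : (ZMod 2)[X]).Monic := by
    apply Polynomial.monic_X_pow_add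
    rw [Polynomial.degree_one]
    exact_mod_cast Nat.pos_of_ne_zero hn0
  have hXndeg : (X ^ n + 1 : (ZMod 2)[X]).natDegree = n := by
    rw [← Polynomial.C_1, Polynomial.natDegree_X_pow_add_C]
  obtain ⟨g, hfg⟩ := hdvd
  have hf0 : f ≠ 0 := hmonic.ne_zero
  have hgmon : g.Monic := hmonic.of_mul_monic_left (hfg ▸ hXn)
  have hg0 : g ≠ 0 := hgmon.ne_zero
  have hgdeg : g.natDegree = n - k := by
    have : k + g.natDegree = n := by
      rw [← hdeg, ← Polynomial.natDegree_mul hf0 hg0, ← hfg, hXndeg]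
    omega
  set φ := frobSF n with hφ
  have hMzero : Polynomial.aeval φ (X ^ n + 1 : (ZMod 2)[X]) = 0 := by
    rw [map_add, map_one, map_pow, Polynomial.aeval_X]
    ext x
    rw [LinearMap.add_apply, LinearMap.zero_apply, Module.End.one_apply, frobSF_pow_apply]
    have hx : x ^ 2 ^ n = x := by
      have := FiniteField.pow_card x
      rwa [hcardF] at this
    rw [hx, CharTwo.add_self_eq_zero]
  have hrange : LinearMap.range (Polynomial.aeval φ g) ≤ LinearMap.ker (Polynomial.aeval φ f) := by
    rintro y ⟨x, rfl⟩
    rw [LinearMap.mem_ker]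
    have hcomp : Polynomial.aeval φ f * Polynomial.aeval φ g = 0 := by
      rw [← map_mul, ← hfg, hMzero]
    calc Polynomial.aeval φ f (Polynomial.aeval φ g x)
        = (Polynomial.aeval φ f * Polynomial.aeval φ g) x := rfl
      _ = 0 := by rw [hcomp]; rfl
  have h1 : Module.finrank (ZMod 2) (LinearMap.ker (Polynomial.aeval φ f)) ≤ k :=
    hdeg ▸ card_ker_le n f hmonic
  have h2 : Module.finrank (ZMod 2) (LinearMap.ker (Polynomial.aeval φ g)) ≤ n - k :=
    hgdeg ▸ card_ker_le n g hgmon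
  have hfr : Module.finrank (ZMod 2) (GaloisField 2 n) = n := GaloisField.finrank 2 hn0
  have h3 : Module.finrank (ZMod 2) (LinearMap.range (Polynomial.aeval φ g)) +
      Module.finrank (ZMod 2) (LinearMap.ker (Polynomial.aeval φ g)) = n := by
    rw [LinearMap.finrank_range_add_finrank_ker, hfr]
  have h4 := Submodule.finrank_mono hrange
  have hE : Module.finrank (ZMod 2) (LinearMap.ker (Polynomial.aeval φ f)) = k := by omega
  intro hSF
  apply hSF 0 (LinearMap.ker (Polynomial.aeval φ f)) hE
  simp only [zero_add]
  set s := Finset.univ.filter (fun x => x ∈ LinearMap.ker (Polynomial.aeval φ f)) with hs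
  have hpowinv : ∀ x : GaloisField 2 n, x ^ (2 ^ n - 2) = x⁻¹ := by
    intro x
    rcases eq_or_ne x 0 with rfl | hx
    · rw [inv_zero, zero_pow (by omega)]
    · have hone : x ^ (2 ^ n - 1) = 1 := by
        have := FiniteField.pow_card_sub_one_eq_one x hx
        rwa [hcardF] at this
      have hmul : x ^ (2 ^ n - 2) * x = 1 := by
        rw [← pow_succ, show 2 ^ n - 2 + 1 = 2 ^ n - 1 by omega, hone]
      exact eq_inv_of_mul_eq_one_left hmul
  rw [Finset.sum_congr rfl (fun x _ => hpowinv x)]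
  have h0mem : (0 : GaloisField 2 n) ∈ s :=
    Finset.mem_filter.mpr ⟨Finset.mem_univ _, Submodule.zero_mem _⟩
  rw [← Finset.add_sum_erase s _ h0mem, inv_zero, zero_add]
  set t := s.erase 0 with ht
  -- cardinality of s
  have hscard : s.card = 2 ^ k := by
    have hcf := Module.card_eq_pow_finrank (K := ZMod 2)
      (V := ↥(LinearMap.ker (Polynomial.aeval φ f)))
    rw [ZMod.card, hE] at hcf
    rw [hs, ← Fintype.card_subtype]
    exact hcf
  -- the product over s equals the linearized polynomial of f
  set Q := linQ n f with hQdef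
  have hQmon : Q.Monic := linQ_monic n f hmonic
  have hQdeg : Q.natDegree = 2 ^ k := by rw [hQdef, linQ_natDegree n f hmonic, hdeg]
  have hroots : s.val ≤ Q.roots := by
    apply Multiset.le_iff_count.mpr
    intro x
    by_cases hx : x ∈ s
    · rw [Multiset.count_eq_one_of_mem s.nodup hx, Polynomial.count_roots]
      rw [Nat.one_le_iff_ne_zero, ← Nat.pos_iff_ne_zero]
      rw [Polynomial.rootMultiplicity_pos hQmon.ne_zero]
      rw [Polynomial.IsRoot.def, hQdef, linQ_eval]
      exact LinearMap.mem_ker.mp (Finset.mem_filter.mp hx).2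
    · rw [Multiset.count_eq_zero_of_notMem (by simpa using hx)]
      exact Nat.zero_le _
  have hP : ∏ x ∈ s, (Polynomial.X - Polynomial.C x) = Q := by
    have hdvdPQ : (∏ x ∈ s, (Polynomial.X - Polynomial.C x)) ∣ Q := by
      rw [Finset.prod_eq_multiset_prod]
      exact (Multiset.prod_X_sub_C_dvd_iff_le_roots hQmon.ne_zero s.val).mpr hroots
    have hPmon : (∏ x ∈ s, (Polynomial.X - Polynomial.C x)).Monic :=
      Polynomial.monic_prod_of_monic _ _ (fun x _ => Polynomial.monic_X_sub_C x)
    have hPdeg : (∏ x ∈ s, (Polynomial.X - Polynomial.C x)).natDegree = 2 ^ k := by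
      rw [Polynomial.natDegree_prod _ _ (fun x _ => Polynomial.X_sub_C_ne_zero x)]
      simp [Polynomial.natDegree_X_sub_C, hscard]
    exact (Polynomial.eq_of_monic_of_dvd_of_natDegree_le hPmon hQmon hdvdPQ
      (by rw [hQdeg, hPdeg])).symm
  have hQc2 : Q.coeff 2 = 0 := by
    rw [hQdef, linQ, Polynomial.finset_sum_coeff]
    rw [Finset.sum_eq_single 1]
    · simp [Polynomial.coeff_C_mul, Polynomial.coeff_X_pow, hcoeff]
    · intro i _ hne
      rw [Polynomial.coeff_C_mul, Polynomial.coeff_X_pow, if_neg, mul_zero]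
      intro h2
      exact hne (Nat.pow_right_injective (le_refl 2) (show (2:ℕ)^i = 2^1 by rw [pow_one, ← h2]))
    · intro h1
      exact absurd (Finset.mem_range.mpr (by rw [hdeg]; omega)) h1
  have hPfac : ∏ x ∈ s, (Polynomial.X - Polynomial.C x)
      = Polynomial.X * ∏ x ∈ t, (Polynomial.X - Polynomial.C x) := by
    rw [← Finset.mul_prod_erase s _ h0mem, map_zero, sub_zero]
  have hRc1 : (∏ x ∈ t, (Polynomial.X - Polynomial.C x)).coeff 1 = 0 := by
    have h := hQc2
    rw [← hP, hPfac, Polynomial.coeff_X_mul] at h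
    exact h
  have hderiv : Polynomial.derivative (∏ x ∈ t, (Polynomial.X - Polynomial.C x))
      = ∑ x ∈ t, ∏ y ∈ t.erase x, (Polynomial.X - Polynomial.C y) := by
    rw [Finset.prod_eq_multiset_prod, Polynomial.derivative_prod, Finset.sum_eq_multiset_sum]
    congr 1
    apply Multiset.map_congr rfl
    intro x _
    rw [Polynomial.derivative_X_sub_C, mul_one, ← Finset.erase_val,
      ← Finset.prod_eq_multiset_prod]
  have hc1eval : (∏ x ∈ t, (Polynomial.X - Polynomial.C x)).coeff 1
      = ∑ x ∈ t, ∏ y ∈ t.erase x, y := by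
    have e1 : (∏ x ∈ t, (Polynomial.X - Polynomial.C x)).coeff 1
        = (Polynomial.derivative (∏ x ∈ t, (Polynomial.X - Polynomial.C x))).coeff 0 := by
      rw [Polynomial.coeff_derivative]
      simp
    rw [e1, Polynomial.coeff_zero_eq_eval_zero, hderiv, Polynomial.eval_finset_sum]
    apply Finset.sum_congr rfl
    intro x _
    rw [Polynomial.eval_prod]
    apply Finset.prod_congr rfl
    intro y _
    rw [Polynomial.eval_sub, Polynomial.eval_X, Polynomial.eval_C, zero_sub, CharTwo.neg_eq]
  set c := ∏ y ∈ t, y with hc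
  have hc0 : c ≠ 0 := by
    rw [hc]
    apply Finset.prod_ne_zero_iff.mpr
    intro y hy
    exact Finset.ne_of_mem_erase hy
  have hterm : ∀ x ∈ t, ∏ y ∈ t.erase x, y = x⁻¹ * c := by
    intro x hx
    have hx0 : x ≠ 0 := Finset.ne_of_mem_erase hx
    have := Finset.mul_prod_erase t id hx
    simp only [id] at this
    rw [hc, ← this, inv_mul_cancel_left₀ hx0]
  have hfinal : (∑ x ∈ t, x⁻¹) * c = 0 := by
    rw [Finset.sum_mul, ← hRc1, hc1eval]
    exact Finset.sum_congr rfl (fun x hx => (hterm x hx).symm)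
  exact (mul_eq_zero.mp hfinal).resolve_right hc0
end

section
/- If n is divisible by an integer s ≥ 2 and R(X) ∈ F_2[X] is a divisor of X^{n/s} + 1 of degree r with r ≤ n/s, then F_inv on F_{2^n} is not (s·r)-th order sum-free. -/
open scoped Classical
open Polynomial

namespace SumFreeAuxC

/-- Every nonzero polynomial over `ZMod 2` is monic. -/
lemma monic_of_ne_zero {P : (ZMod 2)[X]} (h : P ≠ 0) : P.Monic := by
  have h1 : P.leadingCoeff ≠ 0 := leadingCoeff_ne_zero.mpr h
  exact (by decide : ∀ a : ZMod 2, a ≠ 0 → a = 1) _ h1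

noncomputable def em (n : ℕ) : ZMod 2 →+* GaloisField 2 n := algebraMap _ _

lemma em_sq (n : ℕ) (a : ZMod 2) : em n a ^ 2 = em n a := by
  have h : a * a = a := by revert a; decide
  rw [sq, ← map_mul, h]

/-- The linearized ("2-associate") polynomial map attached to `P`. -/
noncomputable def lf (n : ℕ) (P : (ZMod 2)[X]) (x : GaloisField 2 n) : GaloisField 2 n :=
  P.sum fun i a => em n a * x ^ 2 ^ i

lemma lf_def (n : ℕ) (P : (ZMod 2)[X]) (x : GaloisField 2 n) :
    lf n P x = ∑ i ∈ P.support, em n (P.coeff i) * x ^ 2 ^ i :=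
  Polynomial.sum_def _ _

lemma lf_zero (n : ℕ) (x : GaloisField 2 n) : lf n 0 x = 0 :=
  Polynomial.sum_zero_index _

lemma lf_add_left (n : ℕ) (P Q : (ZMod 2)[X]) (x : GaloisField 2 n) :
    lf n (P + Q) x = lf n P x + lf n Q x :=
  Polynomial.sum_add_index P Q _ (fun i => by simp) (fun i b c => by rw [map_add, add_mul])

lemma lf_monomial (n : ℕ) (i : ℕ) (a : ZMod 2) (x : GaloisField 2 n) :
    lf n (monomial i a) x = em n a * x ^ 2 ^ i :=
  Polynomial.sum_monomial_index a _ (by simp)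

/-- `lf` as an additive hom in the polynomial variable. -/
noncomputable def lfhom (n : ℕ) (x : GaloisField 2 n) : (ZMod 2)[X] →+ GaloisField 2 n where
  toFun P := lf n P x
  map_zero' := lf_zero n x
  map_add' P Q := lf_add_left n P Q x

lemma lf_X_mul (n : ℕ) (Q : (ZMod 2)[X]) (x : GaloisField 2 n) :
    lf n (X * Q) x = lf n Q x ^ 2 := by
  have h1 : (X * Q : (ZMod 2)[X]) = ∑ i ∈ Q.support, monomial (i + 1) (Q.coeff i) := by
    conv_lhs => rw [← Q.sum_monomial_eq]
    rw [Polynomial.sum_def, Finset.mul_sum]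
    exact Finset.sum_congr rfl fun i _ => by rw [X_mul, monomial_mul_X]
  rw [h1]
  have h0 : lf n (∑ i ∈ Q.support, monomial (i + 1) (Q.coeff i)) x
      = ∑ i ∈ Q.support, lf n (monomial (i + 1) (Q.coeff i)) x :=
    map_sum (lfhom n x) _ _
  rw [h0]
  have h2 : ∀ i ∈ Q.support, lf n (monomial (i + 1) (Q.coeff i)) x
      = (em n (Q.coeff i) * x ^ 2 ^ i) ^ 2 := by
    intro i _
    rw [lf_monomial, mul_pow, em_sq, ← pow_mul, pow_succ]
  rw [Finset.sum_congr rfl h2, ← sum_pow_char, lf_def]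

lemma lf_X_pow_mul (n : ℕ) (i : ℕ) (Q : (ZMod 2)[X]) (x : GaloisField 2 n) :
    lf n (X ^ i * Q) x = lf n Q x ^ 2 ^ i := by
  induction i generalizing Q with
  | zero => simp
  | succ k ih =>
      have h : (X ^ (k + 1) * Q : (ZMod 2)[X]) = X ^ k * (X * Q) := by ring
      rw [h, ih, lf_X_mul, ← pow_mul, ← pow_succ']

lemma lf_mul (n : ℕ) (P Q : (ZMod 2)[X]) (x : GaloisField 2 n) :
    lf n (P * Q) x = lf n P (lf n Q x) := by
  induction P using Polynomial.induction_on' with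
  | add p q hp hq => rw [add_mul, lf_add_left, lf_add_left, hp, hq]
  | monomial i a =>
      rcases (by decide : ∀ b : ZMod 2, b = 0 ∨ b = 1) a with h | h
      · subst h
        rw [monomial_zero_right, zero_mul, lf_zero, lf_zero]
      · subst h
        rw [← X_pow_eq_monomial, lf_X_pow_mul]
        rw [X_pow_eq_monomial, lf_monomial, map_one, one_mul]

lemma lf_add_right (n : ℕ) (P : (ZMod 2)[X]) (x y : GaloisField 2 n) :
    lf n P (x + y) = lf n P x + lf n P y := by
  rw [lf_def, lf_def, lf_def, ← Finset.sum_add_distrib]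
  exact Finset.sum_congr rfl fun i _ => by rw [add_pow_char_pow, mul_add]

lemma lf_zero_right (n : ℕ) (P : (ZMod 2)[X]) : lf n P 0 = 0 := by
  rw [lf_def]
  exact Finset.sum_eq_zero fun i _ => by
    rw [zero_pow (Nat.two_pow_pos i).ne', mul_zero]

/-- The linearized polynomial map as a `ZMod 2`-linear map. -/
noncomputable def L (n : ℕ) (P : (ZMod 2)[X]) :
    GaloisField 2 n →ₗ[ZMod 2] GaloisField 2 n :=
  AddMonoidHom.toZModLinearMap 2
    { toFun := lf n P
      map_zero' := lf_zero_right n P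
      map_add' := lf_add_right n P }

lemma L_app (n : ℕ) (P : (ZMod 2)[X]) (x : GaloisField 2 n) : L n P x = lf n P x := rfl

/-- The linearized polynomial attached to `P`, as a polynomial over `GaloisField 2 n`. -/
noncomputable def lpoly (n : ℕ) (P : (ZMod 2)[X]) : (GaloisField 2 n)[X] :=
  ∑ i ∈ P.support, C (em n (P.coeff i)) * X ^ 2 ^ i

lemma eval_lpoly (n : ℕ) (P : (ZMod 2)[X]) (x : GaloisField 2 n) :
    (lpoly n P).eval x = lf n P x := by
  rw [lpoly, eval_finset_sum, lf_def]
  exact Finset.sum_congr rfl fun i _ => by rw [eval_mul, eval_C, eval_pow, eval_X]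

lemma lpoly_coeff (n : ℕ) (P : (ZMod 2)[X]) (j : ℕ) :
    (lpoly n P).coeff (2 ^ j) = em n (P.coeff j) := by
  rw [lpoly, finset_sum_coeff]
  simp only [coeff_C_mul, coeff_X_pow]
  rw [Finset.sum_eq_single j]
  · rw [if_pos rfl, mul_one]
  · intro b _ hb
    rw [if_neg fun h => hb (Nat.pow_right_injective le_rfl h.symm), mul_zero]
  · intro hj
    rw [notMem_support_iff.mp hj, map_zero, zero_mul]

lemma lpoly_natDegree_le (n : ℕ) (P : (ZMod 2)[X]) :
    (lpoly n P).natDegree ≤ 2 ^ P.natDegree := by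
  apply natDegree_sum_le_of_forall_le
  intro i hi
  refine (natDegree_C_mul_le _ _).trans ?_
  rw [natDegree_X_pow]
  exact Nat.pow_le_pow_right (by norm_num) (le_natDegree_of_mem_supp i hi)

lemma lpoly_monic (n : ℕ) (P : (ZMod 2)[X]) (hP : P.Monic) : (lpoly n P).Monic := by
  refine monic_of_natDegree_le_of_coeff_eq_one _ (lpoly_natDegree_le n P) ?_
  rw [lpoly_coeff, show P.coeff P.natDegree = 1 from hP, map_one]

lemma lpoly_natDegree (n : ℕ) (P : (ZMod 2)[X]) (hP : P.Monic) :
    (lpoly n P).natDegree = 2 ^ P.natDegree := by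
  refine le_antisymm (lpoly_natDegree_le n P) (le_natDegree_of_ne_zero ?_)
  rw [lpoly_coeff, show P.coeff P.natDegree = 1 from hP, map_one]
  exact one_ne_zero

lemma card_galois (n : ℕ) (hn : 0 < n) : Fintype.card (GaloisField 2 n) = 2 ^ n := by
  rw [← Nat.card_eq_fintype_card, GaloisField.card 2 n hn.ne']

lemma card_ker_le (n : ℕ) (M : (ZMod 2)[X]) (hM : M.Monic) :
    Fintype.card (LinearMap.ker (L n M)) ≤ 2 ^ M.natDegree := by
  have hcongr : Fintype.card (LinearMap.ker (L n M))
      = (Finset.univ.filter fun x : GaloisField 2 n => lf n M x = 0).card := by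
    rw [← Fintype.card_subtype]
    exact Fintype.card_congr
      (Equiv.subtypeEquivRight fun x => by rw [LinearMap.mem_ker, L_app])
  rw [hcongr]
  have hlp := lpoly_monic n M hM
  have hsub : (Finset.univ.filter fun x : GaloisField 2 n => lf n M x = 0)
      ⊆ (lpoly n M).roots.toFinset := by
    intro x hx
    rw [Finset.mem_filter] at hx
    rw [Multiset.mem_toFinset, mem_roots hlp.ne_zero]
    rw [IsRoot, eval_lpoly]
    exact hx.2
  calc (Finset.univ.filter fun x : GaloisField 2 n => lf n M x = 0).card
      ≤ (lpoly n M).roots.toFinset.card := Finset.card_le_card hsub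
    _ ≤ Multiset.card (lpoly n M).roots := Multiset.toFinset_card_le _
    _ ≤ (lpoly n M).natDegree := card_roots' _
    _ = 2 ^ M.natDegree := lpoly_natDegree n M hM

lemma card_submodule (n : ℕ) (W : Submodule (ZMod 2) (GaloisField 2 n)) :
    Fintype.card W = 2 ^ Module.finrank (ZMod 2) W := by
  rw [Module.card_eq_pow_finrank (K := ZMod 2) (V := W), ZMod.card]

lemma finrank_galois (n : ℕ) (hn : 0 < n) :
    Module.finrank (ZMod 2) (GaloisField 2 n) = n := by
  have h1 := Module.card_eq_pow_finrank (K := ZMod 2) (V := GaloisField 2 n)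
  rw [ZMod.card, card_galois n hn] at h1
  exact Nat.pow_right_injective le_rfl h1.symm

lemma finrank_ker_L (n : ℕ) (hn : 0 < n) (P Q : (ZMod 2)[X]) (hP : P.Monic)
    (hQ : P * Q = X ^ n + 1) :
    Module.finrank (ZMod 2) (LinearMap.ker (L n P)) = P.natDegree := by
  have hXn : (X ^ n + 1 : (ZMod 2)[X]) ≠ 0 := fun h => by
    have h2 := congrArg (eval 0) h
    simp [zero_pow hn.ne'] at h2
  have hQ0 : Q ≠ 0 := fun h => hXn (by rw [← hQ, h, mul_zero])
  have hQm : Q.Monic := monic_of_ne_zero hQ0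
  have hdeg_sum : P.natDegree + Q.natDegree = n := by
    have := natDegree_mul hP.ne_zero hQ0
    rw [hQ] at this
    rw [← this, show (1 : (ZMod 2)[X]) = C 1 from (map_one C).symm, natDegree_X_pow_add_C]
  have hkey : ∀ x, lf n P (lf n Q x) = 0 := by
    intro x
    rw [← lf_mul, hQ, lf_add_left,
      show (1 : (ZMod 2)[X]) = monomial 0 1 from (monomial_zero_one).symm,
      X_pow_eq_monomial, lf_monomial, lf_monomial, map_one, one_mul, one_mul, pow_zero,
      pow_one]
    have hx : x ^ 2 ^ n = x := by
      rw [← card_galois n hn]; exact FiniteField.pow_card x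
    rw [hx, CharTwo.add_self_eq_zero]
  have hQker : Module.finrank (ZMod 2) (LinearMap.ker (L n Q)) ≤ Q.natDegree := by
    have h1 := card_ker_le n Q hQm
    rw [card_submodule] at h1
    exact (Nat.pow_le_pow_iff_right (by norm_num)).mp h1
  have hPker_le : Module.finrank (ZMod 2) (LinearMap.ker (L n P)) ≤ P.natDegree := by
    have h1 := card_ker_le n P hP
    rw [card_submodule] at h1
    exact (Nat.pow_le_pow_iff_right (by norm_num)).mp h1
  have hrange : LinearMap.range (L n Q) ≤ LinearMap.ker (L n P) := by
    rintro y hy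
    obtain ⟨x, rfl⟩ := hy
    exact LinearMap.mem_ker.mpr (hkey x)
  have hmono : Module.finrank (ZMod 2) (LinearMap.range (L n Q))
      ≤ Module.finrank (ZMod 2) (LinearMap.ker (L n P)) :=
    Submodule.finrank_mono hrange
  have hrn := LinearMap.finrank_range_add_finrank_ker (L n Q)
  rw [finrank_galois n hn] at hrn
  omega

end SumFreeAuxC

open SumFreeAuxC in
/-- If `s ≥ 2` divides `n` and `R ∈ F_2[X]` is a divisor of `X^(n/s) + 1` of degree
`r ≤ n/s`, then `F_inv` on `F_{2^n}` is not `(s·r)`-th order sum-free. -/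
theorem not_sumFree_of_divisor_composed (n s r : ℕ) (hn : 0 < n) (hs : 2 ≤ s)
    (hsn : s ∣ n) (R : (ZMod 2)[X]) (hdeg : R.natDegree = r) (hr : r ≤ n / s)
    (hdvd : R ∣ (X ^ (n / s) + 1 : (ZMod 2)[X])) :
    ¬ KthOrderSumFree n (s * r) (fun x => x ^ (2 ^ n - 2)) := by
  intro hSF
  set m := n / s with hm
  have hsm : s * m = n := Nat.mul_div_cancel' hsn
  have hm0 : 0 < m := Nat.div_pos (Nat.le_of_dvd hn hsn) (by omega)
  have hn2 : 2 ≤ n := le_trans hs (Nat.le_of_dvd hn hsn)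
  -- the composed polynomial P = R(X^s)
  set P : (ZMod 2)[X] := R.comp (X ^ s) with hPdef
  have hXm_ne : (X ^ m + 1 : (ZMod 2)[X]) ≠ 0 := fun h => by
    have h2 := congrArg (eval 0) h
    simp [zero_pow hm0.ne'] at h2
  have hR0 : R ≠ 0 := fun h => hXm_ne (zero_dvd_iff.mp (h ▸ hdvd))
  have hRm : R.Monic := monic_of_ne_zero hR0
  have hPm : P.Monic := hRm.comp (monic_X_pow _) (by rw [natDegree_X_pow]; omega)
  have hPdeg : P.natDegree = r * s := by
    rw [hPdef, natDegree_comp, natDegree_X_pow, hdeg]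
  -- P divides X^n + 1
  obtain ⟨T, hT⟩ := hdvd
  have hPQ : P * T.comp (X ^ s) = X ^ n + 1 := by
    have hcomp : (X ^ m + 1 : (ZMod 2)[X]).comp (X ^ s) = X ^ n + 1 := by
      rw [add_comp, one_comp, X_pow_comp, ← pow_mul, hsm]
    rw [← hcomp, hT, mul_comp]
  -- coefficient facts
  have hP0 : P.coeff 0 = 1 := by
    have h1 : P.coeff 0 = R.eval 0 := by
      rw [coeff_zero_eq_eval_zero, hPdef, eval_comp, eval_pow, eval_X,
        zero_pow (by omega : s ≠ 0)]
    have h2 : R.eval 0 ∣ (1 : ZMod 2) := by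
      have h3 := eval_dvd (x := (0 : ZMod 2)) ⟨T, hT⟩
      rwa [eval_add, eval_pow, eval_X, eval_one, zero_pow hm0.ne', zero_add] at h3
    have h4 : R.eval 0 ≠ 0 := by
      intro h0
      rw [h0, zero_dvd_iff] at h2
      exact one_ne_zero h2
    rw [h1]
    exact (by decide : ∀ a : ZMod 2, a ≠ 0 → a = 1) _ h4
  have hP1 : P.coeff 1 = 0 := by
    rw [hPdef, comp_eq_sum_left, Polynomial.sum_def, finset_sum_coeff]
    apply Finset.sum_eq_zero
    intro e _
    rw [← pow_mul, coeff_C_mul, coeff_X_pow, if_neg, mul_zero]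
    intro h
    rcases e with _ | e
    · omega
    · have h2 : 2 ≤ s * (e + 1) := le_trans hs (Nat.le_mul_of_pos_right s (Nat.succ_pos e))
      omega
  -- the kernel subspace
  have hrank : Module.finrank (ZMod 2) (LinearMap.ker (L n P)) = s * r := by
    rw [finrank_ker_L n hn P _ hPm hPQ, hPdeg, Nat.mul_comm]
  have hcontra := hSF 0 (LinearMap.ker (L n P)) hrank
  apply hcontra
  simp only [zero_add]
  set KF : Finset (GaloisField 2 n) :=
    Finset.univ.filter (fun x => x ∈ LinearMap.ker (L n P)) with hKF
  show ∑ x ∈ KF, x ^ (2 ^ n - 2) = 0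
  have hKFmem : ∀ x, x ∈ KF ↔ lf n P x = 0 := by
    intro x
    rw [hKF, Finset.mem_filter]
    constructor
    · intro h
      exact LinearMap.mem_ker.mp h.2
    · intro h
      exact ⟨Finset.mem_univ x, LinearMap.mem_ker.mpr h⟩
  -- cardinality of KF
  have hcard : Fintype.card (GaloisField 2 n) = 2 ^ n := card_galois n hn
  have hKFcard : KF.card = 2 ^ (r * s) := by
    have h1 : Fintype.card (LinearMap.ker (L n P)) = 2 ^ (r * s) := by
      rw [card_submodule, hrank, Nat.mul_comm]
    rw [← h1, ← Fintype.card_subtype]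
  -- the subspace polynomial
  set p : (GaloisField 2 n)[X] := lpoly n P with hp
  have hpm : p.Monic := lpoly_monic n P hPm
  have hpd : p.natDegree = 2 ^ (r * s) := by rw [hp, lpoly_natDegree n P hPm, hPdeg]
  have hKF_sub : KF ⊆ p.roots.toFinset := by
    intro x hx
    rw [Multiset.mem_toFinset, mem_roots hpm.ne_zero, IsRoot, hp, eval_lpoly]
    exact (hKFmem x).mp hx
  have hc1 : Multiset.card p.roots ≤ 2 ^ (r * s) := hpd ▸ card_roots' p
  have hc2 : p.roots.toFinset.card ≤ Multiset.card p.roots := Multiset.toFinset_card_le _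
  have hc3 : KF.card ≤ p.roots.toFinset.card := Finset.card_le_card hKF_sub
  have hroots_eq_KF : p.roots.toFinset = KF :=
    (Finset.eq_of_subset_of_card_le hKF_sub (by omega)).symm
  have hnodup : p.roots.Nodup :=
    Multiset.toFinset_card_eq_card_iff_nodup.mp (by omega)
  have hroots_val : p.roots = KF.val := by
    conv_lhs => rw [← Multiset.dedup_eq_self.mpr hnodup, ← Multiset.toFinset_val,
      hroots_eq_KF]
  have hprodKF : p = ∏ x ∈ KF, (X - C x) := by
    rw [Finset.prod_eq_multiset_prod, ← hroots_val]
    exact (prod_multiset_X_sub_C_of_monic_of_roots_card_eq hpm (by omega)).symm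
  have h0mem : (0 : GaloisField 2 n) ∈ KF := (hKFmem 0).mpr (lf_zero_right n P)
  set t : Finset (GaloisField 2 n) := KF.erase 0 with ht
  set B : (GaloisField 2 n)[X] := ∏ x ∈ t, (X - C x) with hB
  have hsplit : p = X * B := by
    rw [hprodKF, ← Finset.mul_prod_erase KF _ h0mem, C_0, sub_zero, ← ht, ← hB]
  -- coefficients of B
  have hB0 : B.coeff 0 = 1 := by
    have h1 : p.coeff 1 = 1 := by
      have := lpoly_coeff n P 0
      rw [pow_zero, hP0, map_one] at this
      exact this
    have h2 : p.coeff 1 = B.coeff 0 := by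
      rw [hsplit]
      exact coeff_X_mul B 0
    rw [← h2, h1]
  have hB1 : B.coeff 1 = 0 := by
    have h1 : p.coeff 2 = 0 := by
      have := lpoly_coeff n P 1
      rw [pow_one, hP1, map_zero] at this
      exact this
    have h2 : p.coeff 2 = B.coeff 1 := by
      rw [hsplit]
      exact coeff_X_mul B 1
    rw [← h2, h1]
  have hB0' : B.coeff 0 = ∏ x ∈ t, x := by
    rw [hB, coeff_zero_eq_eval_zero, eval_prod]
    exact Finset.prod_congr rfl fun x _ => by
      rw [eval_sub, eval_X, eval_C, zero_sub, CharTwo.neg_eq]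
  have hB1' : B.coeff 1 = ∑ x ∈ t, ∏ y ∈ t.erase x, y := by
    have hder : derivative B = ∑ x ∈ t, ∏ y ∈ t.erase x, (X - C y) := by
      rw [hB, Finset.prod_eq_multiset_prod, derivative_prod]
      rw [Finset.sum_eq_multiset_sum]
      congr 1
      apply Multiset.map_congr rfl
      intro x _
      rw [derivative_sub, derivative_X, derivative_C, sub_zero, mul_one,
        Finset.prod_eq_multiset_prod]
      rfl
    have h1 : B.coeff 1 = (derivative B).eval 0 := by
      rw [← coeff_zero_eq_eval_zero, coeff_derivative]
      simp
    rw [h1, hder, eval_finset_sum]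
    apply Finset.sum_congr rfl
    intro x _
    rw [eval_prod]
    exact Finset.prod_congr rfl fun y _ => by
      rw [eval_sub, eval_X, eval_C, zero_sub, CharTwo.neg_eq]
  -- exponent facts
  have h4le : 4 ≤ 2 ^ n := by
    calc (4 : ℕ) = 2 ^ 2 := by norm_num
      _ ≤ 2 ^ n := Nat.pow_le_pow_right (by norm_num) hn2
  -- split off zero
  have hsum_split : ∑ x ∈ KF, x ^ (2 ^ n - 2) = ∑ x ∈ t, x ^ (2 ^ n - 2) := by
    rw [← Finset.add_sum_erase KF _ h0mem, zero_pow (by omega : 2 ^ n - 2 ≠ 0), zero_add]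
  have hterm : ∀ x ∈ t, x ^ (2 ^ n - 2) = x⁻¹ := by
    intro x hx
    have hx0 : x ≠ 0 := (Finset.mem_erase.mp hx).1
    have h1 : x ^ (2 ^ n - 1) = 1 := by
      have := FiniteField.pow_card_sub_one_eq_one x hx0
      rwa [hcard] at this
    have h2 : x ^ (2 ^ n - 2) * x = 1 := by
      rw [← pow_succ, show 2 ^ n - 2 + 1 = 2 ^ n - 1 by omega]
      exact h1
    exact eq_inv_of_mul_eq_one_left h2
  rw [hsum_split, Finset.sum_congr rfl hterm]
  -- the main computation
  have hprod1 : ∏ y ∈ t, y = 1 := by rw [← hB0', hB0]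
  have hkey : (∑ x ∈ t, x⁻¹) * ∏ y ∈ t, y = ∑ x ∈ t, ∏ y ∈ t.erase x, y := by
    rw [Finset.sum_mul]
    apply Finset.sum_congr rfl
    intro x hx
    have hx0 : x ≠ 0 := (Finset.mem_erase.mp hx).1
    rw [← Finset.mul_prod_erase t _ hx, inv_mul_cancel_left₀ hx0]
  calc ∑ x ∈ t, x⁻¹ = (∑ x ∈ t, x⁻¹) * ∏ y ∈ t, y := by rw [hprod1, mul_one]
    _ = ∑ x ∈ t, ∏ y ∈ t.erase x, y := hkey
    _ = B.coeff 1 := hB1'.symm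
    _ = 0 := hB1
end

section
/- For v_1,…,v_k ∈ F_{2^n} linearly independent over F_2, the sum ∑_{0≠x∈⟨v_1,…,v_k⟩} 1/x equals Δ_1(v_1,…,v_k) / Δ(v_1,…,v_k)^2, where Δ is the Moore determinant and Δ_1 is the k×k determinant with rows of powers 2^0, 2^2, 2^3, …, 2^k (the row of squares omitted, replaced by the row of 2^k-th powers). -/
open scoped Classical

open Polynomial Matrix Finset

namespace MooreAux

variable {F : Type*} [Field F]

section CharTwoCoeff

variable [CharP F 2]

lemma coeff_zero_prod (s : Finset F) :
    (∏ x ∈ s, (X + C x)).coeff 0 = ∏ x ∈ s, x := by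
  rw [Polynomial.coeff_zero_eq_eval_zero, Polynomial.eval_prod]
  simp

lemma coeff_one_prod (s : Finset F) :
    (∏ x ∈ s, (X + C x)).coeff 1 = ∑ x ∈ s, ∏ y ∈ s.erase x, y := by
  induction s using Finset.induction_on with
  | empty => simp [Polynomial.coeff_one]
  | @insert a s ha ih =>
    rw [Finset.prod_insert ha, add_mul, Polynomial.coeff_add]
    have h1 : (X * ∏ x ∈ s, (X + C x)).coeff 1 = ∏ x ∈ s, x := by
      rw [show (1 : ℕ) = 0 + 1 from rfl, Polynomial.coeff_X_mul, coeff_zero_prod]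
    have h2 : (C a * ∏ x ∈ s, (X + C x)).coeff 1 = a * ∑ x ∈ s, ∏ y ∈ s.erase x, y := by
      rw [Polynomial.coeff_C_mul, ih]
    rw [h1, h2, Finset.sum_insert ha, Finset.erase_insert ha, Finset.mul_sum]
    congr 1
    refine Finset.sum_congr rfl fun x hx => ?_
    rw [Finset.erase_insert_of_ne (by rintro rfl; exact ha hx),
      Finset.prod_insert (fun h => ha (Finset.mem_of_mem_erase h))]

lemma coeff_one_prod' (s : Finset F) (h0 : (0 : F) ∉ s) :
    (∏ x ∈ s, (X + C x)).coeff 1 = (∏ x ∈ s, x) * ∑ x ∈ s, x⁻¹ := by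
  rw [coeff_one_prod, Finset.mul_sum]
  refine Finset.sum_congr rfl fun x hx => ?_
  have hx0 : x ≠ 0 := fun h => h0 (h ▸ hx)
  rw [← Finset.mul_prod_erase s _ hx, mul_comm x, mul_assoc, mul_inv_cancel₀ hx0, mul_one]

end CharTwoCoeff

noncomputable def moore {k : ℕ} (v : Fin k → F) : F :=
  Matrix.det (Matrix.of fun i j : Fin k => v j ^ 2 ^ (i : ℕ))

noncomputable def minor {k : ℕ} (v : Fin k → F) (e : Fin (k + 1)) : F :=
  Matrix.det (Matrix.of fun i j : Fin k => v j ^ 2 ^ ((e.succAbove i : ℕ)))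

noncomputable def mpoly {k : ℕ} (v : Fin k → F) : F[X] :=
  Matrix.det (Matrix.of fun i j : Fin (k + 1) =>
    if h : (j : ℕ) < k then C (v ⟨j, h⟩ ^ 2 ^ (i : ℕ)) else X ^ 2 ^ (i : ℕ))

section CharTwo

variable [CharP F 2]

lemma mpoly_eq_sum {k : ℕ} (v : Fin k → F) :
    mpoly v = ∑ e : Fin (k + 1), C (minor v e) * X ^ 2 ^ (e : ℕ) := by
  rw [mpoly, Matrix.det_succ_column _ (Fin.last k)]
  refine Finset.sum_congr rfl fun i _ => ?_
  have hneg : (-1 : F[X]) = 1 := CharTwo.neg_eq 1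
  have hlast : ¬ ((Fin.last k : ℕ) < k) := by simp
  have hsub : (Matrix.of fun i j : Fin (k + 1) =>
        if h : (j : ℕ) < k then C (v ⟨j, h⟩ ^ 2 ^ (i : ℕ)) else X ^ 2 ^ (i : ℕ)).submatrix
          i.succAbove (Fin.last k).succAbove
      = (Matrix.of fun a b : Fin k => v b ^ 2 ^ ((i.succAbove a : ℕ))).map C := by
    ext a b
    have hb : ((Fin.castSucc b : Fin (k + 1)) : ℕ) < k := by simp
    simp only [Matrix.submatrix_apply, Fin.succAbove_last, Matrix.map_apply, Matrix.of_apply]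
    rw [dif_pos hb]
    congr 1
  rw [hsub, ← RingHom.mapMatrix_apply, ← RingHom.map_det]
  simp only [Matrix.of_apply, hlast, dif_neg, not_false_iff, hneg, one_pow, one_mul]
  rw [mul_comm]
  rfl

lemma mpoly_coeff {k : ℕ} (v : Fin k → F) (e : Fin (k + 1)) :
    (mpoly v).coeff (2 ^ (e : ℕ)) = minor v e := by
  rw [mpoly_eq_sum, Polynomial.finset_sum_coeff]
  rw [Finset.sum_eq_single e]
  · rw [Polynomial.coeff_C_mul_X_pow, if_pos rfl]
  · intro i _ hie
    rw [Polynomial.coeff_C_mul_X_pow, if_neg]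
    intro h
    exact hie (Fin.ext (Nat.pow_right_injective (le_refl 2) h.symm))
  · intro h; exact absurd (Finset.mem_univ e) h

lemma mpoly_natDegree_le {k : ℕ} (v : Fin k → F) : (mpoly v).natDegree ≤ 2 ^ k := by
  rw [mpoly_eq_sum]
  refine Polynomial.natDegree_sum_le_of_forall_le _ _ fun i _ => ?_
  refine le_trans (Polynomial.natDegree_C_mul_le _ _) ?_
  rw [Polynomial.natDegree_X_pow]
  exact Nat.pow_le_pow_right (by norm_num) (Fin.is_le i)

variable [Algebra (ZMod 2) F]

lemma eval_mpoly_eq_zero {k : ℕ} (v : Fin k → F) {x : F}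
    (hx : x ∈ Submodule.span (ZMod 2) (Set.range v)) : (mpoly v).eval x = 0 := by
  obtain ⟨c, hc⟩ := (Submodule.mem_span_range_iff_exists_fun (ZMod 2)).mp hx
  have heval : (mpoly v).eval x = Matrix.det (Matrix.of fun i j : Fin (k + 1) =>
      if h : (j : ℕ) < k then v ⟨j, h⟩ ^ 2 ^ (i : ℕ) else x ^ 2 ^ (i : ℕ)) := by
    rw [mpoly, ← Polynomial.coe_evalRingHom, RingHom.map_det, RingHom.mapMatrix_apply]
    congr 1
    ext i j
    simp only [Matrix.map_apply, Matrix.of_apply]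
    split_ifs <;> simp
  rw [heval]
  set B := (Matrix.of fun i j : Fin (k + 1) =>
      if h : (j : ℕ) < k then v ⟨j, h⟩ ^ 2 ^ (i : ℕ) else x ^ 2 ^ (i : ℕ)) with hB
  refine Matrix.exists_mulVec_eq_zero_iff.mp ?_
  refine ⟨fun j => algebraMap (ZMod 2) F ((Fin.snoc c 1 : Fin (k + 1) → ZMod 2) j), ?_, ?_⟩
  · intro h
    have := congrFun h (Fin.last k)
    simp [Fin.snoc_last] at this
  · funext i
    have hxpow : x ^ 2 ^ (i : ℕ) = ∑ j, algebraMap (ZMod 2) F (c j) * v j ^ 2 ^ (i : ℕ) := by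
      rw [← hc, ← iterateFrobenius_def 2 (i : ℕ), map_sum]
      refine Finset.sum_congr rfl fun j _ => ?_
      rw [iterateFrobenius_def, _root_.smul_pow, ZMod.pow_card_pow, Algebra.smul_def]
    simp only [Matrix.mulVec, dotProduct]
    rw [Fin.sum_univ_castSucc]
    have hlast : ¬ ((Fin.last k : ℕ) < k) := by simp
    have hterm : ∀ j : Fin k, B i (Fin.castSucc j) * algebraMap (ZMod 2) F
        ((Fin.snoc c 1 : Fin (k + 1) → ZMod 2) (Fin.castSucc j)) =
          algebraMap (ZMod 2) F (c j) * v j ^ 2 ^ (i : ℕ) := by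
      intro j
      have hj : ((Fin.castSucc j : Fin (k + 1)) : ℕ) < k := by simp
      rw [hB, Fin.snoc_castSucc]
      simp only [Matrix.of_apply]
      rw [dif_pos hj, mul_comm]
      congr 2
    rw [Finset.sum_congr rfl fun j _ => hterm j]
    rw [hB]
    simp only [Matrix.of_apply, Fin.snoc_last]
    rw [dif_neg hlast, ← hxpow, _root_.map_one, mul_one, Pi.zero_apply,
      CharTwo.add_self_eq_zero]

end CharTwo

section Main

variable [Fintype F] [Algebra (ZMod 2) F]

lemma chartwo : CharP F 2 :=
  charP_of_injective_algebraMap (algebraMap (ZMod 2) F).injective 2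

lemma card_span {k : ℕ} (v : Fin k → F) (hv : LinearIndependent (ZMod 2) v) :
    (Finset.univ.filter (· ∈ Submodule.span (ZMod 2) (Set.range v))).card = 2 ^ k := by
  have h1 : Fintype.card (Submodule.span (ZMod 2) (Set.range v)) =
      (Finset.univ.filter (· ∈ Submodule.span (ZMod 2) (Set.range v))).card :=
    Fintype.card_subtype _
  rw [← h1, Module.card_eq_pow_finrank (K := ZMod 2), finrank_span_eq_card hv]
  simp [ZMod.card]

lemma minor_last {k : ℕ} (v : Fin k → F) : minor v (Fin.last k) = moore v := by
  unfold minor moore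
  congr 1
  ext i j
  simp [Fin.succAbove_last]

lemma mpoly_eq {k : ℕ} (v : Fin k → F) (hv : LinearIndependent (ZMod 2) v) :
    mpoly v = C (moore v) *
      ∏ x ∈ Finset.univ.filter (· ∈ Submodule.span (ZMod 2) (Set.range v)), (X - C x) := by
  haveI : CharP F 2 := chartwo
  set Vf := Finset.univ.filter (· ∈ Submodule.span (ZMod 2) (Set.range v)) with hVf
  set P : F[X] := ∏ x ∈ Vf, (X - C x) with hP
  have hPmonic : P.Monic := monic_prod_of_monic _ _ fun x _ => monic_X_sub_C x
  have hPdeg : P.natDegree = 2 ^ k := by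
    rw [hP, Polynomial.natDegree_prod _ _ fun x _ => Polynomial.X_sub_C_ne_zero x]
    simp [Polynomial.natDegree_X_sub_C, card_span v hv]
    exact card_span v hv
  have hcoeff : (mpoly v).coeff (2 ^ k) = moore v := by
    have := mpoly_coeff v (Fin.last k)
    rwa [Fin.val_last, minor_last] at this
  by_cases h0 : mpoly v = 0
  · rw [h0]
    rw [h0, Polynomial.coeff_zero] at hcoeff
    rw [← hcoeff, map_zero, zero_mul]
  have hdvd : P ∣ mpoly v := by
    have hle : Vf.val ≤ (mpoly v).roots := by
      rw [Multiset.le_iff_count]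
      intro a
      by_cases ha : a ∈ Vf
      · have h1 : Vf.val.count a = 1 := Multiset.count_eq_one_of_mem Vf.nodup ha
        rw [h1, Polynomial.count_roots]
        refine (Polynomial.rootMultiplicity_pos h0).mpr ?_
        exact eval_mpoly_eq_zero v (by simpa [hVf] using ha)
      · rw [Multiset.count_eq_zero_of_notMem (by simpa using ha)]
        exact Nat.zero_le _
    calc P = (Vf.val.map fun a => X - C a).prod := by rw [hP, Finset.prod_eq_multiset_prod]
      _ ∣ ((mpoly v).roots.map fun a => X - C a).prod :=
          Multiset.prod_dvd_prod_of_le (Multiset.map_le_map hle)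
      _ ∣ mpoly v := Polynomial.prod_multiset_X_sub_C_dvd _
  obtain ⟨q, hq⟩ := hdvd
  have hq0 : q ≠ 0 := by
    intro h; rw [h, mul_zero] at hq; exact h0 hq
  have hqdeg : q.natDegree = 0 := by
    have := mpoly_natDegree_le v
    rw [hq, Polynomial.natDegree_mul hPmonic.ne_zero hq0, hPdeg] at this
    omega
  obtain ⟨c, hc⟩ := Polynomial.natDegree_eq_zero.mp hqdeg
  have hcval : c = moore v := by
    rw [← hcoeff, hq, ← hc, Polynomial.coeff_mul_C, ← hPdeg, hPmonic.coeff_natDegree, one_mul]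
  rw [hq, ← hc, hcval, mul_comm]

lemma moore_ne_zero {k : ℕ} : ∀ (v : Fin k → F), LinearIndependent (ZMod 2) v →
    moore v ≠ 0 := by
  haveI : CharP F 2 := chartwo
  induction k with
  | zero => intro v _; simp [moore, Matrix.det_fin_zero]
  | succ k ih =>
    intro v hv
    set w : Fin k → F := v ∘ Fin.castSucc with hw
    have hwi : LinearIndependent (ZMod 2) w := hv.comp _ (Fin.castSucc_injective k)
    have hme := mpoly_eq w hwi
    have h1 : (mpoly w).eval (v (Fin.last k)) = moore v := by
      rw [mpoly, ← Polynomial.coe_evalRingHom, RingHom.map_det, RingHom.mapMatrix_apply, moore]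
      congr 1
      ext i j
      simp only [Matrix.map_apply, Matrix.of_apply]
      by_cases h : (j : ℕ) < k
      · rw [dif_pos h]
        simp only [map_pow, Polynomial.eval_C, Polynomial.coe_evalRingHom]
        exact congrArg (fun t => v t ^ 2 ^ (i : ℕ)) (Fin.ext rfl)
      · rw [dif_neg h]
        have hj : j = Fin.last k := by
          apply Fin.ext
          rw [Fin.val_last]
          omega
        simp [hj]
    have hnm : v (Fin.last k) ∉ Submodule.span (ZMod 2) (Set.range w) := by
      have hrange : Set.range w = v '' (Set.range Fin.castSucc) := by
        rw [hw, Set.range_comp]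
      rw [hrange]
      refine hv.notMem_span_image ?_
      rintro ⟨a, ha⟩
      exact absurd ha (Fin.castSucc_lt_last a).ne
    have h2 : moore v = moore w *
        ∏ x ∈ Finset.univ.filter (· ∈ Submodule.span (ZMod 2) (Set.range w)),
          (v (Fin.last k) - x) := by
      rw [← h1, hme]
      rw [Polynomial.eval_mul, Polynomial.eval_C, Polynomial.eval_prod]
      simp
    rw [h2]
    refine mul_ne_zero (ih w hwi) ?_
    rw [Finset.prod_ne_zero_iff]
    intro x hx
    refine sub_ne_zero_of_ne fun h => hnm ?_
    rw [h]
    simpa using hx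

end Main

end MooreAux

/-- For `v_1, …, v_k ∈ F_{2^n}` linearly independent over `F_2`,
`∑_{0 ≠ x ∈ ⟨v_1,…,v_k⟩} 1/x = Δ_1(v_1,…,v_k) / Δ(v_1,…,v_k)^2`, where `Δ` is the Moore
determinant and `Δ_1` is the determinant with rows of `2^e`-th powers for
`e ∈ {0, 2, 3, …, k}`. -/
theorem sum_inv_span_eq (n k : ℕ) (hn : 0 < n) (hk : 0 < k) (hkn : k ≤ n)
    (v : Fin k → GaloisField 2 n) (hv : LinearIndependent (ZMod 2) v) :
    (∑ x ∈ Finset.univ.filter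
        (fun x => x ∈ Submodule.span (ZMod 2) (Set.range v) ∧ x ≠ 0), x⁻¹) =
      Matrix.det (Matrix.of fun i j : Fin k =>
          v j ^ 2 ^ (if (i : ℕ) = 0 then 0 else (i : ℕ) + 1))
        / (Matrix.det (Matrix.of fun i j : Fin k => v j ^ 2 ^ (i : ℕ))) ^ 2 := by
  classical
  obtain ⟨m, rfl⟩ : ∃ m, k = m + 1 := ⟨k - 1, by omega⟩
  haveI hchar : CharP (GaloisField 2 n) 2 := inferInstance
  set Δ : GaloisField 2 n := MooreAux.moore v with hΔ
  set Δ₁ : GaloisField 2 n := Matrix.det (Matrix.of fun i j : Fin (m + 1) =>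
      v j ^ 2 ^ (if (i : ℕ) = 0 then 0 else (i : ℕ) + 1)) with hΔ₁
  have hΔne : Δ ≠ 0 := MooreAux.moore_ne_zero v hv
  set Vf : Finset (GaloisField 2 n) := Finset.univ.filter (· ∈ Submodule.span (ZMod 2) (Set.range v)) with hVf
  set V' : Finset (GaloisField 2 n) := Vf.erase 0 with hV'
  have h0mem : (0 : GaloisField 2 n) ∈ Vf := by
    rw [hVf]
    simp only [Finset.mem_filter, Finset.mem_univ, true_and]
    exact Submodule.zero_mem _
  have h0nmem : (0 : GaloisField 2 n) ∉ V' := Finset.notMem_erase _ _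
  set Q : (GaloisField 2 n)[X] := ∏ x ∈ V', (Polynomial.X + Polynomial.C x) with hQ
  have hme := MooreAux.mpoly_eq v hv
  have hP : ∏ x ∈ Vf, (Polynomial.X - Polynomial.C x) = Polynomial.X * Q := by
    rw [← Finset.mul_prod_erase Vf _ h0mem, map_zero, sub_zero, hQ]
    exact congrArg _ (Finset.prod_congr rfl fun x _ => CharTwo.sub_eq_add _ _)
  rw [hP] at hme
  -- coefficient at 1
  have hminor0 : MooreAux.minor v (0 : Fin (m + 2)) = Δ ^ 2 := by
    rw [MooreAux.minor, hΔ, MooreAux.moore]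
    have hmap : (Matrix.of fun i j : Fin (m + 1) =>
        v j ^ 2 ^ (((0 : Fin (m + 2)).succAbove i : ℕ)))
        = (Matrix.of fun i j : Fin (m + 1) => v j ^ 2 ^ (i : ℕ)).map
            (frobenius (GaloisField 2 n) 2) := by
      ext i j
      simp only [Matrix.of_apply, Matrix.map_apply, frobenius_def]
      rw [Fin.succAbove_zero, Fin.val_succ, pow_succ, pow_mul]
    rw [hmap, ← RingHom.mapMatrix_apply, ← RingHom.map_det, frobenius_def, sq]
  have hc1 : Δ ^ 2 = Δ * ∏ x ∈ V', x := by
    have h1 := MooreAux.mpoly_coeff v (0 : Fin (m + 2))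
    have h0 : ((0 : Fin (m + 2)) : ℕ) = 0 := rfl
    rw [h0, pow_zero, hme, hminor0] at h1
    have h2 : (Polynomial.X * Q).coeff 1 = Q.coeff 0 := by
      simpa using Polynomial.coeff_X_mul Q 0
    rw [← h1, Polynomial.coeff_C_mul, h2, hQ, MooreAux.coeff_zero_prod]
  -- coefficient at 2
  have hminor1 : MooreAux.minor v (1 : Fin (m + 2)) = Δ₁ := by
    rw [MooreAux.minor, hΔ₁]
    congr 1
    ext i j
    simp only [Matrix.of_apply]
    congr 2
    by_cases hi : (i : ℕ) = 0
    · have hlt : Fin.castSucc i < (1 : Fin (m + 2)) := by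
        rw [Fin.lt_def, Fin.coe_castSucc, Fin.val_one]
        omega
      rw [Fin.succAbove, if_pos hlt, if_pos hi, Fin.coe_castSucc, hi]
    · have hlt : ¬ Fin.castSucc i < (1 : Fin (m + 2)) := by
        rw [Fin.lt_def, Fin.coe_castSucc, Fin.val_one]
        omega
      rw [Fin.succAbove, if_neg hlt, if_neg hi, Fin.val_succ]
  have hc2 : Δ₁ = Δ * ((∏ x ∈ V', x) * ∑ x ∈ V', x⁻¹) := by
    have h1 := MooreAux.mpoly_coeff v (1 : Fin (m + 2))
    have h0 : ((1 : Fin (m + 2)) : ℕ) = 1 := Fin.val_one _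
    rw [h0, pow_one, hme, hminor1] at h1
    have h2 : (Polynomial.X * Q).coeff 2 = Q.coeff 1 := by
      simpa using Polynomial.coeff_X_mul Q 1
    rw [← h1, Polynomial.coeff_C_mul, h2, hQ, MooreAux.coeff_one_prod' V' h0nmem]
  -- the sum in the goal is over V'
  have hsum : (Finset.univ.filter
      (fun x => x ∈ Submodule.span (ZMod 2) (Set.range v) ∧ x ≠ 0)) = V' := by
    ext y
    simp only [hV', hVf, Finset.mem_filter, Finset.mem_univ, true_and, Finset.mem_erase]
    tauto
  have hprod : ∏ x ∈ V', x = Δ := by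
    have := hc1
    rw [sq] at this
    exact (mul_left_cancel₀ hΔne this).symm
  have hden : (Matrix.of fun i j : Fin (m + 1) => v j ^ 2 ^ (i : ℕ)).det = Δ := rfl
  rw [hsum, hden, eq_div_iff (pow_ne_zero 2 hΔne)]
  rw [hc2, hprod, sq]
  ring
end

section
/- Let α ∈ F_{2^n} be a normal element over F_2 and write X^n − 1 = f·g in F_2[X] with deg f = k. Set x = g(σ)(α), where σ is Frobenius. Then x, σ(x), …, σ^{k−1}(x) are F_2-linearly independent, and f(σ)(x) = 0. -/
open Polynomial

/-- For `h = ∑ c_i X^i ∈ F_2[X]`, `h(σ)` applied to `y`, where `σ(y) = y^2` is the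
Frobenius, i.e. `∑ c_i • y^(2^i)`. -/
noncomputable def applyFrob {n : ℕ} (h : (ZMod 2)[X]) (y : GaloisField 2 n) :
    GaloisField 2 n :=
  ∑ i ∈ Finset.range (h.natDegree + 1), h.coeff i • y ^ 2 ^ i

noncomputable def phi (n : ℕ) : GaloisField 2 n →ₗ[ZMod 2] GaloisField 2 n where
  toFun y := y ^ 2
  map_add' x y := add_pow_char x y 2
  map_smul' c y := by
    simp only [RingHom.id_apply]
    rw [_root_.smul_pow]
    congr 1
    exact ZMod.pow_card c

lemma phi_pow_apply (n i : ℕ) (y : GaloisField 2 n) : ((phi n) ^ i) y = y ^ 2 ^ i := by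
  induction i with
  | zero => simp
  | succ i ih =>
    rw [pow_succ', Module.End.mul_apply, ih]
    show (y ^ 2 ^ i) ^ 2 = _
    rw [← pow_mul, pow_succ]

lemma aeval_phi (n : ℕ) (p : (ZMod 2)[X]) (m : ℕ) (hm : p.natDegree < m)
    (y : GaloisField 2 n) :
    (aeval (phi n) p) y = ∑ i ∈ Finset.range m, p.coeff i • y ^ 2 ^ i := by
  rw [Polynomial.aeval_eq_sum_range, LinearMap.sum_apply]
  simp only [LinearMap.smul_apply, phi_pow_apply]
  apply Finset.sum_subset
  · exact Finset.range_subset_range.2 hm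
  · intro i _ hi
    rw [Polynomial.coeff_eq_zero_of_natDegree_lt, zero_smul]
    simp only [Finset.mem_range, not_lt] at hi
    omega

lemma applyFrob_eq (n : ℕ) (p : (ZMod 2)[X]) (y : GaloisField 2 n) :
    applyFrob p y = (aeval (phi n) p) y := by
  rw [applyFrob, aeval_phi n p (p.natDegree + 1) (Nat.lt_succ_self _)]

lemma key (n : ℕ) (α : GaloisField 2 n)
    (hα : LinearIndependent (ZMod 2) (fun i : Fin n => α ^ 2 ^ (i : ℕ)))
    (p : (ZMod 2)[X]) (hp : p.natDegree < n) (h0 : (aeval (phi n) p) α = 0) : p = 0 := by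
  rw [aeval_phi n p n hp,
    ← Fin.sum_univ_eq_sum_range (fun i => p.coeff i • α ^ 2 ^ i) n] at h0
  have hz := Fintype.linearIndependent_iff.mp hα (fun i => p.coeff i) h0
  ext j
  by_cases hj : j < n
  · simpa using hz ⟨j, hj⟩
  · simp [Polynomial.coeff_eq_zero_of_natDegree_lt (lt_of_lt_of_le hp (le_of_not_gt hj))]


/-- Let `α ∈ F_{2^n}` be a normal element over `F_2` and `X^n - 1 = f·g` in `F_2[X]` with
`deg f = k`. Set `x = g(σ)(α)`. Then `x, σ(x), …, σ^(k-1)(x)` are `F_2`-linearly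
independent and `f(σ)(x) = 0`. -/
theorem normal_element_construction (n k : ℕ) (hk : 1 ≤ k) (hkn : k ≤ n)
    (α : GaloisField 2 n)
    (hα : LinearIndependent (ZMod 2) (fun i : Fin n => α ^ 2 ^ (i : ℕ)))
    (f g : (ZMod 2)[X]) (hfg : f * g = (X ^ n - 1 : (ZMod 2)[X]))
    (hdeg : f.natDegree = k) :
    LinearIndependent (ZMod 2) (fun i : Fin k => (applyFrob g α) ^ 2 ^ (i : ℕ)) ∧
    applyFrob f (applyFrob g α) = 0 := by
  have hn : 1 ≤ n := le_trans hk hkn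
  have hXn : (X ^ n - 1 : (ZMod 2)[X]).natDegree = n := by
    rw [show (1 : (ZMod 2)[X]) = C 1 from (map_one C).symm,
      Polynomial.natDegree_X_pow_sub_C]
  have hne : (X ^ n - 1 : (ZMod 2)[X]) ≠ 0 := fun h => by
    rw [h, Polynomial.natDegree_zero] at hXn; omega
  have hf0 : f ≠ 0 := fun h => hne (by rw [← hfg, h, zero_mul])
  have hg0 : g ≠ 0 := fun h => hne (by rw [← hfg, h, mul_zero])
  have hsum : f.natDegree + g.natDegree = n := by
    rw [← Polynomial.natDegree_mul hf0 hg0, hfg, hXn]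
  have hgdeg : g.natDegree = n - k := by omega
  set x : GaloisField 2 n := applyFrob g α with hx
  have hxval : x = (aeval (phi n) g) α := applyFrob_eq n g α
  -- part 2
  have hcard : α ^ 2 ^ n = α := by
    haveI : Fintype (GaloisField 2 n) := Fintype.ofFinite _
    have h1 : Fintype.card (GaloisField 2 n) = 2 ^ n := by
      rw [← Nat.card_eq_fintype_card]; exact GaloisField.card 2 n (by omega)
    rw [← h1]; exact FiniteField.pow_card α
  have part2 : applyFrob f x = 0 := by
    rw [applyFrob_eq, hxval, ← Module.End.mul_apply, ← map_mul, hfg]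
    simp [phi_pow_apply, hcard]
  refine ⟨?_, part2⟩
  rw [Fintype.linearIndependent_iff]
  intro c hc i
  set h : (ZMod 2)[X] := ∑ i : Fin k, monomial (i : ℕ) (c i) with hh
  have hhdeg : h.natDegree < k := by
    have : h.natDegree ≤ k - 1 :=
      Polynomial.natDegree_sum_le_of_forall_le _ _ (fun i _ =>
        le_trans (Polynomial.natDegree_monomial_le _) (by omega))
    omega
  have hcoeff : ∀ i : Fin k, h.coeff (i : ℕ) = c i := by
    intro i
    rw [hh, Polynomial.finset_sum_coeff]
    simp only [Polynomial.coeff_monomial]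
    rw [Finset.sum_eq_single i]
    · simp
    · intro b _ hb
      exact if_neg (fun e => hb (Fin.ext e))
    · simp
  have hcx : (aeval (phi n) h) x = 0 := by
    rw [aeval_phi n h k hhdeg,
      ← Fin.sum_univ_eq_sum_range (fun i => h.coeff i • x ^ 2 ^ i) k]
    rw [← hc]
    exact Finset.sum_congr rfl (fun i _ => by rw [hcoeff])
  have hhg : h * g = 0 := by
    apply key n α hα
    · calc (h * g).natDegree ≤ h.natDegree + g.natDegree := Polynomial.natDegree_mul_le
        _ < n := by omega
    · rw [map_mul, Module.End.mul_apply, ← hxval, hcx]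
  have : h = 0 := by
    rcases mul_eq_zero.mp hhg with h' | h'
    · exact h'
    · exact absurd h' hg0
  rw [← hcoeff i, this, Polynomial.coeff_zero]
end

section
/- Define F_k = Δ_1(X_1,…,X_k)/Δ(X_1,…,X_k) ∈ F_2[X_1,…,X_k]. Then F_k is homogeneous of degree 2^k − 2, symmetric in X_1,…,X_k, and the exponents of X_1 appearing in F_k are among {0, 1, 2, 4, …, 2^{k−1}} (F_k is an affine 2-polynomial in X_1). -/
open MvPolynomial Finset

/-! ### Auxiliary: expansion of Moore-type determinants over `F₂` -/

/-- The multidegree of the permutation term in a Moore-type determinant. -/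
noncomputable def mm (k : ℕ) (e : Fin k → ℕ) (σ : Equiv.Perm (Fin k)) : Fin k →₀ ℕ :=
  ∑ i : Fin k, Finsupp.single i (2 ^ e (σ i))

lemma mm_apply {k : ℕ} (e : Fin k → ℕ) (σ : Equiv.Perm (Fin k)) (j : Fin k) :
    mm k e σ j = 2 ^ e (σ j) := by
  classical
  simp only [mm, Finsupp.finset_sum_apply, Finsupp.single_apply]
  rw [Finset.sum_eq_single j]
  · simp
  · intro b _ hb; simp [hb]
  · simp

lemma mm_injective {k : ℕ} {e : Fin k → ℕ} (he : Function.Injective e) :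
    Function.Injective (mm k e) := by
  intro σ τ h
  ext j
  have := congrArg (fun m => m j) h
  simp only [mm_apply] at this
  exact congrArg Fin.val (he (Nat.pow_right_injective (le_refl 2) this))

lemma prod_X_pow_eq_monomial' {k : ℕ} (s : Finset (Fin k)) (f : Fin k → Fin k)
    (d : Fin k → ℕ) :
    (∏ i ∈ s, (X (f i) : MvPolynomial (Fin k) (ZMod 2)) ^ d i) =
      monomial (∑ i ∈ s, Finsupp.single (f i) (d i)) 1 := by
  classical
  induction s using Finset.cons_induction with
  | empty => simp
  | cons a s ha ih =>
      rw [Finset.prod_cons, Finset.sum_cons, ih, X_pow_eq_monomial, monomial_mul, one_mul]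

lemma zmod2_units_smul {k : ℕ} (u : ℤˣ) (p : MvPolynomial (Fin k) (ZMod 2)) : u • p = p := by
  rcases Int.units_eq_one_or u with h | h <;> subst h
  · simp
  · have : (-1 : ℤˣ) • p = -p := by
      rw [Units.smul_def]; push_cast; rw [neg_zsmul, one_zsmul]
    rw [this, CharTwo.neg_eq]

lemma detX_eq {k : ℕ} (e : Fin k → ℕ) :
    Matrix.det (Matrix.of fun i j : Fin k =>
        (X j : MvPolynomial (Fin k) (ZMod 2)) ^ 2 ^ (e i)) =
      ∑ σ : Equiv.Perm (Fin k), monomial (mm k e σ) 1 := by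
  rw [Matrix.det_apply]
  refine Finset.sum_congr rfl fun σ _ => ?_
  rw [zmod2_units_smul]
  simp only [Matrix.of_apply]
  rw [show (∏ i : Fin k, (X i : MvPolynomial (Fin k) (ZMod 2)) ^ 2 ^ e (σ i)) =
      monomial (mm k e σ) 1 from prod_X_pow_eq_monomial' Finset.univ id _]

lemma coeff_detX {k : ℕ} {e : Fin k → ℕ} (he : Function.Injective e)
    (τ : Equiv.Perm (Fin k)) :
    coeff (mm k e τ) (Matrix.det (Matrix.of fun i j : Fin k =>
        (X j : MvPolynomial (Fin k) (ZMod 2)) ^ 2 ^ (e i))) = 1 := by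
  classical
  rw [detX_eq, coeff_sum]
  simp only [coeff_monomial]
  rw [Finset.sum_congr rfl (fun σ _ => show (if mm k e σ = mm k e τ then (1:ZMod 2) else 0)
      = if σ = τ then 1 else 0 by
    congr 1
    exact propext ⟨fun hh => mm_injective he hh, fun hh => by rw [hh]⟩)]
  simp

lemma support_detX {k : ℕ} (e : Fin k → ℕ) :
    (Matrix.det (Matrix.of fun i j : Fin k =>
        (X j : MvPolynomial (Fin k) (ZMod 2)) ^ 2 ^ (e i))).support ⊆
      Finset.univ.image (mm k e) := by
  classical
  rw [detX_eq]
  refine (MvPolynomial.support_sum).trans ?_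
  intro m hm
  simp only [Finset.mem_biUnion] at hm
  obtain ⟨σ, -, hσ⟩ := hm
  have := MvPolynomial.support_monomial_subset hσ
  simp only [Finset.mem_singleton] at this
  subst this
  exact Finset.mem_image_of_mem _ (Finset.mem_univ σ)

lemma degree_eq_sum_univ {σ : Type*} [Fintype σ] (d : σ →₀ ℕ) :
    d.degree = ∑ i, d i := by
  classical
  rw [Finsupp.degree]
  exact (Finset.sum_subset (Finset.subset_univ _)
    (fun x _ hx => Finsupp.notMem_support_iff.mp hx))

lemma detX_homog {k : ℕ} (e : Fin k → ℕ) :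
    (Matrix.det (Matrix.of fun i j : Fin k =>
        (X j : MvPolynomial (Fin k) (ZMod 2)) ^ 2 ^ (e i))).IsHomogeneous
      (∑ i : Fin k, 2 ^ (e i)) := by
  rw [detX_eq]
  apply MvPolynomial.IsHomogeneous.sum
  intro σ _
  refine isHomogeneous_monomial _ ?_
  rw [degree_eq_sum_univ]
  simp only [mm_apply]
  exact Equiv.sum_comp σ (fun i => 2 ^ e i)

/-! ### Homogeneity is preserved by quotients -/

lemma homogComp_mul {σ : Type*} {R : Type*} [CommRing R]
    {A : MvPolynomial σ R} {a : ℕ} (hA : A.IsHomogeneous a)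
    (F : MvPolynomial σ R) (d : ℕ) :
    homogeneousComponent (a + d) (A * F) = A * homogeneousComponent d F := by
  classical
  ext m
  rw [coeff_homogeneousComponent, coeff_mul, coeff_mul]
  have key : ∀ x : (σ →₀ ℕ) × (σ →₀ ℕ), x ∈ Finset.HasAntidiagonal.antidiagonal m →
      coeff x.1 A * coeff x.2 (homogeneousComponent d F)
        = if m.degree = a + d then coeff x.1 A * coeff x.2 F else 0 := by
    intro x hx
    rw [coeff_homogeneousComponent]
    by_cases hu : coeff x.1 A = 0
    · simp [hu]
    · have hdeg : x.1.degree = a := by rw [Finsupp.degree_eq_weight_one]; exact hA hu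
      have hxm : x.1 + x.2 = m := Finset.HasAntidiagonal.mem_antidiagonal.mp hx
      have hmd : m.degree = x.1.degree + x.2.degree := by
        rw [← hxm]
        simp only [Finsupp.degree_eq_weight_one, map_add]
      by_cases hv : x.2.degree = d
      · rw [if_pos hv, if_pos (by omega)]
      · rw [if_neg hv, if_neg (by omega), mul_zero]
  by_cases hm : m.degree = a + d
  · rw [if_pos hm]
    exact Finset.sum_congr rfl fun x hx => by rw [key x hx, if_pos hm]
  · rw [if_neg hm]
    exact (Finset.sum_eq_zero fun x hx => by rw [key x hx, if_neg hm]).symm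

lemma homog_of_mul_homog {σ : Type*} {R : Type*} [CommRing R] [IsDomain R]
    {A B F : MvPolynomial σ R} {a n : ℕ} (hA : A.IsHomogeneous a)
    (hB : B.IsHomogeneous (a + n)) (hA0 : A ≠ 0) (h : A * F = B) :
    F.IsHomogeneous n := by
  classical
  have hzero : ∀ d : ℕ, d ≠ n → homogeneousComponent d F = 0 := by
    intro d hd
    have h1 : A * homogeneousComponent d F = 0 := by
      rw [← homogComp_mul hA F d, h,
        homogeneousComponent_of_mem (mem_homogeneousSubmodule _ _ |>.mpr hB),
        if_neg (by omega)]
    exact (mul_eq_zero.mp h1).resolve_left hA0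
  have hsum := sum_homogeneousComponent F
  by_cases hn : n ∈ Finset.range (F.totalDegree + 1)
  · rw [Finset.sum_eq_single_of_mem n hn (fun i _ hi => hzero i hi)] at hsum
    rw [← hsum]
    exact homogeneousComponent_isHomogeneous n F
  · rw [Finset.sum_eq_zero (fun i hi => hzero i (fun hin => hn (hin ▸ hi)))] at hsum
    rw [← hsum]
    exact isHomogeneous_zero _ _ _

/-! ### Ore-type division of additive polynomials, char 2 -/

lemma support_sq_pow2 {K : Type*} [Field K] [CharP K 2] {P : Polynomial K}
    (hP : ∀ v ∈ P.support, ∃ j : ℕ, v = 2 ^ j) :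
    ∀ v ∈ (P ^ 2).support, ∃ j : ℕ, v = 2 ^ j := by
  intro v hv
  have hmap : P ^ 2 = Polynomial.map (frobenius K 2) (Polynomial.expand K 2 P) :=
    (Polynomial.map_frobenius_expand (p := 2) P).symm
  rw [hmap] at hv
  have hv2 : v ∈ (Polynomial.expand K 2 P).support := Polynomial.support_map_subset _ _ hv
  rw [Polynomial.mem_support_iff, Polynomial.coeff_expand (by norm_num : 0 < 2)] at hv2
  by_cases h2 : 2 ∣ v
  · obtain ⟨j, hj⟩ := hP (v / 2) (by
      rw [Polynomial.mem_support_iff]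
      intro h0
      rw [if_pos h2, h0] at hv2
      exact hv2 rfl)
    refine ⟨j + 1, ?_⟩
    obtain ⟨w, rfl⟩ := h2
    rw [Nat.mul_div_cancel_left w (by norm_num)] at hj
    rw [hj]; ring
  · rw [if_neg h2] at hv2; exact absurd rfl hv2

lemma ore_div {K : Type*} [Field K] [CharP K 2] {P Q : Polynomial K}
    (hP : ∀ v ∈ P.support, ∃ j : ℕ, v = 2 ^ j)
    (hQ : ∀ v ∈ Q.support, ∃ j : ℕ, v = 2 ^ j)
    (hP0 : P ≠ 0) (hdvd : P ∣ Q) (hdeg : Q.natDegree ≤ 2 * P.natDegree) :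
    ∃ a b : K, Q = (Polynomial.C a * P + Polynomial.C b) * P := by
  classical
  obtain ⟨u, hu⟩ : ∃ u : ℕ, P.natDegree = 2 ^ u :=
    (hP _ (Polynomial.natDegree_mem_support_of_nonzero hP0)).imp fun j hj => hj
  set d := P.natDegree with hd
  set a : K := Q.coeff (2 * d) / (P.leadingCoeff ^ 2) with ha
  set Q₁ : Polynomial K := Q - Polynomial.C a * P ^ 2 with hQ₁
  have hlc : P.leadingCoeff ≠ 0 := Polynomial.leadingCoeff_ne_zero.mpr hP0
  have hP2deg : (P ^ 2).natDegree = 2 * d := by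
    rw [Polynomial.natDegree_pow]
  have hP2top : (P ^ 2).coeff (2 * d) = P.leadingCoeff ^ 2 := by
    rw [← hP2deg, Polynomial.coeff_natDegree, Polynomial.leadingCoeff_pow]
  have hQ₁deg : ∀ v, 2 * d ≤ v → Q₁.coeff v = 0 := by
    intro v hv
    rw [hQ₁, Polynomial.coeff_sub, Polynomial.coeff_C_mul]
    rcases eq_or_lt_of_le hv with h | h
    · rw [← h, hP2top, ha, div_mul_cancel₀ _ (pow_ne_zero 2 hlc), sub_self]
    · rw [Polynomial.coeff_eq_zero_of_natDegree_lt (lt_of_le_of_lt hdeg h),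
        Polynomial.coeff_eq_zero_of_natDegree_lt (hP2deg ▸ h), mul_zero, sub_zero]
  have hdvd1 : P ∣ Q₁ := by
    apply dvd_sub hdvd
    exact Dvd.dvd.mul_left (dvd_pow_self P (by norm_num)) _
  have hQ₁supp : ∀ v ∈ Q₁.support, ∃ j : ℕ, v = 2 ^ j := by
    intro v hv
    rw [Polynomial.mem_support_iff, hQ₁, Polynomial.coeff_sub, Polynomial.coeff_C_mul] at hv
    by_cases h1 : Q.coeff v = 0
    · refine support_sq_pow2 hP v ?_
      rw [Polynomial.mem_support_iff]
      intro h2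
      rw [h1, h2, mul_zero, sub_zero] at hv
      exact hv rfl
    · exact hQ v (Polynomial.mem_support_iff.mpr h1)
  by_cases hz : Q₁ = 0
  · refine ⟨a, 0, ?_⟩
    have hq : Q - Polynomial.C a * P ^ 2 = 0 := hQ₁ ▸ hz
    rw [sub_eq_zero] at hq
    rw [map_zero, add_zero, hq]; ring
  · have hmem := Polynomial.natDegree_mem_support_of_nonzero hz
    obtain ⟨w, hw⟩ := hQ₁supp _ hmem
    have hlt : Q₁.natDegree < 2 * d := by
      by_contra hge
      exact Polynomial.mem_support_iff.mp hmem (hQ₁deg _ (not_lt.mp hge))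
    have hle : Q₁.natDegree ≤ d := by
      rw [hw, hu]
      rw [hw, hu] at hlt
      have h2 : 2 ^ w < 2 ^ (u + 1) := by rw [pow_succ]; omega
      exact Nat.pow_le_pow_right (by norm_num) (by
        have := (Nat.pow_lt_pow_iff_right (a := 2) (by norm_num)).mp h2
        omega)
    have heq : Q₁.natDegree = d := by
      rcases eq_or_lt_of_le hle with h | h
      · exact h
      · exact absurd (Polynomial.eq_zero_of_dvd_of_natDegree_lt hdvd1 h) hz
    set b : K := Q₁.leadingCoeff / P.leadingCoeff with hb
    have hb0 : b ≠ 0 := div_ne_zero (Polynomial.leadingCoeff_ne_zero.mpr hz) hlc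
    have hlcb : Q₁.leadingCoeff = (Polynomial.C b * P).leadingCoeff := by
      rw [Polynomial.leadingCoeff_mul, Polynomial.leadingCoeff_C, hb,
        div_mul_cancel₀ _ hlc]
    have hdegeq : Q₁.degree = (Polynomial.C b * P).degree := by
      rw [Polynomial.degree_mul, Polynomial.degree_C hb0, zero_add,
        Polynomial.degree_eq_natDegree hz, Polynomial.degree_eq_natDegree hP0, heq]
    have hQ2lt : (Q₁ - Polynomial.C b * P).degree < Q₁.degree :=
      Polynomial.degree_sub_lt hdegeq hz hlcb
    have hdvd2 : P ∣ Q₁ - Polynomial.C b * P := dvd_sub hdvd1 (Dvd.dvd.mul_left dvd_rfl _)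
    have hQ2z : Q₁ - Polynomial.C b * P = 0 := by
      by_contra hne
      refine hne (Polynomial.eq_zero_of_dvd_of_natDegree_lt hdvd2 ?_)
      have := Polynomial.natDegree_lt_natDegree hne hQ2lt
      omega
    rw [sub_eq_zero] at hQ2z
    refine ⟨a, b, ?_⟩
    have hfinal : Q - Polynomial.C a * P ^ 2 = Polynomial.C b * P := hQ₁ ▸ hQ2z
    linear_combination hfinal

/-! ### Arithmetic helpers -/

lemma sum_range_two_pow (k : ℕ) : ∑ i ∈ Finset.range k, 2 ^ i = 2 ^ k - 1 := by
  induction k with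
  | zero => simp
  | succ m ih =>
      rw [Finset.sum_range_succ, ih]
      have h1 : 1 ≤ 2 ^ m := Nat.one_le_two_pow
      have h2 : 2 ^ (m + 1) = 2 * 2 ^ m := by rw [pow_succ]; ring
      omega

lemma sum_range_two_pow' (k : ℕ) (hk : 1 ≤ k) :
    ∑ i ∈ Finset.range k, 2 ^ (if i = 0 then 0 else i + 1) = 2 ^ (k + 1) - 3 := by
  induction k with
  | zero => omega
  | succ m ih =>
      rcases Nat.eq_or_lt_of_le hk with h | h
      · simp [← h]
      · have hm : 1 ≤ m := by omega
        rw [Finset.sum_range_succ, ih hm, if_neg (by omega)]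
        have h1 : 4 ≤ 2 ^ (m + 1) := by
          calc (4 : ℕ) = 2 ^ 2 := by norm_num
          _ ≤ 2 ^ (m + 1) := Nat.pow_le_pow_right (by norm_num) (by omega)
        have h2 : 2 ^ (m + 1 + 1) = 2 * 2 ^ (m + 1) := by rw [pow_succ]; ring
        omega

/-- Let `Fk = Δ_1(X_1,…,X_k)/Δ(X_1,…,X_k) ∈ F_2[X_1,…,X_k]` (i.e. `Δ · Fk = Δ_1`). Then
`Fk` is homogeneous of degree `2^k - 2`, symmetric in the variables, and the exponents
of `X_1` occurring in `Fk` are among `{0, 2^0, 2^1, …, 2^(k-1)}`. -/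
theorem Fk_properties (k : ℕ) (hk : 1 ≤ k) (Fk : MvPolynomial (Fin k) (ZMod 2))
    (hFk : Matrix.det (Matrix.of fun i j : Fin k =>
          (X j : MvPolynomial (Fin k) (ZMod 2)) ^ 2 ^ (i : ℕ)) * Fk =
        Matrix.det (Matrix.of fun i j : Fin k =>
          (X j : MvPolynomial (Fin k) (ZMod 2)) ^
            2 ^ (if (i : ℕ) = 0 then 0 else (i : ℕ) + 1))) :
    Fk.IsHomogeneous (2 ^ k - 2) ∧
    Fk.IsSymmetric ∧
    (∀ m ∈ Fk.support, m ⟨0, hk⟩ = 0 ∨ ∃ e < k, m ⟨0, hk⟩ = 2 ^ e) := by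
  classical
  obtain ⟨n, rfl⟩ : ∃ n, k = n + 1 := ⟨k - 1, by omega⟩
  set e₀ : Fin (n + 1) → ℕ := fun i => (i : ℕ) with he₀def
  set e₁ : Fin (n + 1) → ℕ := fun i => if (i : ℕ) = 0 then 0 else (i : ℕ) + 1 with he₁def
  have he₀ : Function.Injective e₀ := fun i j h => Fin.ext h
  have he₁ : Function.Injective e₁ := by
    intro i j h
    simp only [he₁def] at h
    refine Fin.ext ?_
    split_ifs at h <;> omega
  set Δ := Matrix.det (Matrix.of fun i j : Fin (n + 1) =>
    (X j : MvPolynomial (Fin (n + 1)) (ZMod 2)) ^ 2 ^ (e₀ i)) with hΔdef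
  set Δ₁ := Matrix.det (Matrix.of fun i j : Fin (n + 1) =>
    (X j : MvPolynomial (Fin (n + 1)) (ZMod 2)) ^ 2 ^ (e₁ i)) with hΔ₁def
  have hFk' : Δ * Fk = Δ₁ := hFk
  -- Δ ≠ 0
  have hΔ0 : Δ ≠ 0 := by
    intro h0
    have := coeff_detX he₀ (Equiv.refl _)
    rw [← hΔdef, h0, coeff_zero] at this
    exact zero_ne_one this
  -- homogeneity degrees
  have hΔhom : Δ.IsHomogeneous (2 ^ (n + 1) - 1) := by
    have := detX_homog e₀
    rw [← hΔdef] at this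
    convert this using 1
    simp only [he₀def]
    rw [Fin.sum_univ_eq_sum_range (fun i => 2 ^ i) (n+1), sum_range_two_pow]
  have hΔ₁hom : Δ₁.IsHomogeneous ((2 ^ (n + 1) - 1) + (2 ^ (n + 1) - 2)) := by
    have := detX_homog e₁
    rw [← hΔ₁def] at this
    convert this using 1
    simp only [he₁def]
    rw [Fin.sum_univ_eq_sum_range (fun i => 2 ^ (if i = 0 then 0 else i + 1)) (n+1),
      sum_range_two_pow' _ (by omega)]
    have h1 : 2 ≤ 2 ^ (n + 1) := by
      calc (2:ℕ) = 2 ^ 1 := by norm_num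
      _ ≤ 2 ^ (n + 1) := Nat.pow_le_pow_right (by norm_num) (by omega)
    have h2 : 2 ^ (n + 1 + 1) = 2 * 2 ^ (n + 1) := by rw [pow_succ]; ring
    omega
  have hhom : Fk.IsHomogeneous (2 ^ (n + 1) - 2) :=
    homog_of_mul_homog hΔhom hΔ₁hom hΔ0 hFk'
  refine ⟨hhom, ?_, ?_⟩
  -- symmetry
  · intro π
    have hren : ∀ (e : Fin (n+1) → ℕ),
        rename (⇑π) (Matrix.det (Matrix.of fun i j : Fin (n + 1) =>
          (X j : MvPolynomial (Fin (n + 1)) (ZMod 2)) ^ 2 ^ (e i)))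
        = Matrix.det (Matrix.of fun i j : Fin (n + 1) =>
          (X j : MvPolynomial (Fin (n + 1)) (ZMod 2)) ^ 2 ^ (e i)) := by
      intro e
      set f : MvPolynomial (Fin (n+1)) (ZMod 2) →+* MvPolynomial (Fin (n+1)) (ZMod 2) :=
        ((rename (⇑π) : MvPolynomial (Fin (n+1)) (ZMod 2) →ₐ[ZMod 2]
          MvPolynomial (Fin (n+1)) (ZMod 2)) : MvPolynomial (Fin (n+1)) (ZMod 2) →+*
          MvPolynomial (Fin (n+1)) (ZMod 2)) with hf
      show f (Matrix.det (Matrix.of fun i j : Fin (n + 1) =>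
          (X j : MvPolynomial (Fin (n + 1)) (ZMod 2)) ^ 2 ^ (e i))) = _
      rw [RingHom.map_det]
      have hmat : (RingHom.mapMatrix f)
          (Matrix.of fun i j : Fin (n + 1) =>
            (X j : MvPolynomial (Fin (n + 1)) (ZMod 2)) ^ 2 ^ (e i))
          = (Matrix.of fun i j : Fin (n + 1) =>
            (X j : MvPolynomial (Fin (n + 1)) (ZMod 2)) ^ 2 ^ (e i)).submatrix id ⇑π := by
        ext i j
        simp [hf, Matrix.submatrix, map_pow]
      rw [hmat, Matrix.det_permute']
      have hsgn : ((Equiv.Perm.sign π : ℤ) : MvPolynomial (Fin (n+1)) (ZMod 2)) = 1 := by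
        rcases Int.units_eq_one_or (Equiv.Perm.sign π) with h | h <;> rw [h]
        · simp
        · push_cast
          exact CharTwo.neg_eq 1
      rw [hsgn, one_mul]
    have hrΔ : rename (⇑π) Δ = Δ := by rw [hΔdef]; exact hren e₀
    have hrΔ₁ : rename (⇑π) Δ₁ = Δ₁ := by rw [hΔ₁def]; exact hren e₁
    have h1 : Δ * rename (⇑π) Fk = Δ * Fk := by
      have h2 := congrArg (rename (⇑π)) hFk'
      rw [map_mul, hrΔ, hrΔ₁] at h2
      rw [h2, hFk']
    exact mul_left_cancel₀ hΔ0 h1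
  -- support condition on the first variable
  · intro m hm
    set R' := MvPolynomial (Fin n) (ZMod 2) with hR'
    set K := FractionRing R' with hK
    haveI : CharP K 2 := charP_of_injective_ringHom (IsFractionRing.injective R' K) 2
    set Φ : MvPolynomial (Fin (n+1)) (ZMod 2) →+* Polynomial K :=
      (Polynomial.mapRingHom (algebraMap R' K)).comp
        ((finSuccEquiv (ZMod 2) n : MvPolynomial (Fin (n+1)) (ZMod 2) →+* Polynomial R')) with hΦ
    have halginj : Function.Injective (algebraMap R' K) := IsFractionRing.injective R' K
    have hΦcoeff : ∀ (p : MvPolynomial (Fin (n+1)) (ZMod 2)) (v : ℕ),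
        (Φ p).coeff v = algebraMap R' K ((finSuccEquiv (ZMod 2) n p).coeff v) := by
      intro p v
      simp [hΦ, Polynomial.coeff_map]
    have hΦcoeff_ne : ∀ (p : MvPolynomial (Fin (n+1)) (ZMod 2)) (v : ℕ),
        (Φ p).coeff v ≠ 0 ↔ (finSuccEquiv (ZMod 2) n p).coeff v ≠ 0 := by
      intro p v
      rw [hΦcoeff]
      constructor
      · intro h h0; rw [h0, map_zero] at h; exact h rfl
      · intro h h0; exact h (halginj (h0.trans (map_zero _).symm))
    -- support description for images of the two determinants
    have hsupport : ∀ (e : Fin (n+1) → ℕ) (v : ℕ),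
        v ∈ (Φ (Matrix.det (Matrix.of fun i j : Fin (n + 1) =>
          (X j : MvPolynomial (Fin (n + 1)) (ZMod 2)) ^ 2 ^ (e i)))).support →
        ∃ i : Fin (n+1), v = 2 ^ (e i) := by
      intro e v hv
      rw [Polynomial.mem_support_iff, hΦcoeff_ne] at hv
      have hne : (Polynomial.coeff (finSuccEquiv (ZMod 2) n
          (Matrix.det (Matrix.of fun i j : Fin (n + 1) =>
            (X j : MvPolynomial (Fin (n + 1)) (ZMod 2)) ^ 2 ^ (e i)))) v) ≠ 0 := hv
      obtain ⟨m', hm'⟩ := MvPolynomial.ne_zero_iff.mp hne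
      have hcons : Finsupp.cons v m' ∈ (Matrix.det (Matrix.of fun i j : Fin (n + 1) =>
          (X j : MvPolynomial (Fin (n + 1)) (ZMod 2)) ^ 2 ^ (e i))).support :=
        mem_support_coeff_finSuccEquiv.mp (MvPolynomial.mem_support_iff.mpr hm')
      have := support_detX e hcons
      rw [Finset.mem_image] at this
      obtain ⟨σ, -, hσ⟩ := this
      have h0 := congrArg (fun f => f 0) hσ
      simp only [mm_apply, Finsupp.cons_zero] at h0
      exact ⟨σ 0, h0.symm⟩
    set P : Polynomial K := Φ Δ with hP
    set G : Polynomial K := Φ Fk with hG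
    set Q : Polynomial K := Φ Δ₁ with hQ
    have hPG : P * G = Q := by rw [hP, hG, hQ, ← map_mul, hFk']
    have hΦinj : Function.Injective Φ := by
      rw [hΦ]
      exact (Polynomial.map_injective _ halginj).comp (finSuccEquiv (ZMod 2) n).injective
    have hP0 : P ≠ 0 := fun h0 => hΔ0 (hΦinj (h0.trans (map_zero Φ).symm))
    have hsupP : ∀ v ∈ P.support, ∃ j : ℕ, j ≤ n ∧ v = 2 ^ j := by
      intro v hv
      obtain ⟨i, hi⟩ := hsupport e₀ v hv
      exact ⟨e₀ i, by simp only [he₀def]; omega, hi⟩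
    have hsupQ : ∀ v ∈ Q.support, ∃ j : ℕ, j ≤ n + 1 ∧ v = 2 ^ j := by
      intro v hv
      obtain ⟨i, hi⟩ := hsupport e₁ v hv
      refine ⟨e₁ i, ?_, hi⟩
      simp only [he₁def]
      split_ifs with h
      · omega
      · have := i.isLt; omega
    -- degree of P is exactly 2^n
    have hPdegle : P.natDegree ≤ 2 ^ n := by
      obtain ⟨j, hj, hvj⟩ := hsupP _ (Polynomial.natDegree_mem_support_of_nonzero hP0)
      rw [hvj]
      exact Nat.pow_le_pow_right (by norm_num) hj
    have hPdegge : 2 ^ n ≤ P.natDegree := by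
      set τ : Equiv.Perm (Fin (n+1)) := Equiv.swap 0 ⟨n, Nat.lt_succ_self n⟩ with hτ
      set m₀ : Fin (n+1) →₀ ℕ := mm (n+1) e₀ τ with hm₀
      have hm₀0 : m₀ 0 = 2 ^ n := by
        rw [hm₀, mm_apply, hτ]
        simp [Equiv.swap_apply_left, he₀def]
      have hc : coeff m₀ Δ = 1 := coeff_detX he₀ τ
      have hmem : m₀ ∈ Δ.support := by
        rw [MvPolynomial.mem_support_iff, hc]; exact one_ne_zero
      have hcons : Finsupp.cons (2 ^ n) m₀.tail ∈ Δ.support := by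
        rw [← hm₀0, Finsupp.cons_tail]; exact hmem
      have : m₀.tail ∈ ((finSuccEquiv (ZMod 2) n Δ).coeff (2 ^ n)).support :=
        mem_support_coeff_finSuccEquiv.mpr hcons
      have hne : (finSuccEquiv (ZMod 2) n Δ).coeff (2 ^ n) ≠ 0 :=
        MvPolynomial.ne_zero_iff.mpr ⟨m₀.tail, MvPolynomial.mem_support_iff.mp this⟩
      have : P.coeff (2 ^ n) ≠ 0 := (hΦcoeff_ne Δ (2 ^ n)).mpr hne
      exact Polynomial.le_natDegree_of_ne_zero this
    have hPdeg : P.natDegree = 2 ^ n := le_antisymm hPdegle hPdegge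
    have hQdeg : Q.natDegree ≤ 2 * P.natDegree := by
      by_cases h0 : Q = 0
      · rw [h0]; simp
      · obtain ⟨j, hj, hvj⟩ := hsupQ _ (Polynomial.natDegree_mem_support_of_nonzero h0)
        rw [hvj, hPdeg, ← pow_succ']
        exact Nat.pow_le_pow_right (by norm_num) (by omega)
    obtain ⟨a, b, hab⟩ := ore_div
      (fun v hv => (hsupP v hv).imp fun j hj => hj.2)
      (fun v hv => (hsupQ v hv).imp fun j hj => hj.2)
      hP0 ⟨G, hPG.symm⟩ hQdeg
    have hGeq : G = Polynomial.C a * P + Polynomial.C b := by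
      apply mul_right_cancel₀ hP0
      rw [← hab, mul_comm G P, hPG]
    -- finish: examine the exponent of the first variable in m
    have hmk : (⟨0, hk⟩ : Fin (n+1)) = 0 := rfl
    rw [hmk]
    by_cases hv0 : m 0 = 0
    · exact Or.inl hv0
    · right
      have hcoeff : coeff m Fk ≠ 0 := MvPolynomial.mem_support_iff.mp hm
      have hcons : Finsupp.cons (m 0) m.tail ∈ Fk.support := by
        rw [Finsupp.cons_tail]; exact hm
      have h1 : m.tail ∈ ((finSuccEquiv (ZMod 2) n Fk).coeff (m 0)).support :=
        mem_support_coeff_finSuccEquiv.mpr hcons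
      have h2 : (finSuccEquiv (ZMod 2) n Fk).coeff (m 0) ≠ 0 :=
        MvPolynomial.ne_zero_iff.mpr ⟨m.tail, MvPolynomial.mem_support_iff.mp h1⟩
      have h3 : G.coeff (m 0) ≠ 0 := (hΦcoeff_ne Fk (m 0)).mpr h2
      rw [hGeq, Polynomial.coeff_add, Polynomial.coeff_C_mul, Polynomial.coeff_C,
        if_neg hv0, add_zero] at h3
      have h4 : P.coeff (m 0) ≠ 0 := fun h => h3 (by rw [h, mul_zero])
      obtain ⟨j, hj, hvj⟩ := hsupP _ (Polynomial.mem_support_iff.mpr h4)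
      exact ⟨j, by omega, hvj⟩
end

section
/- Assume l ≥ 2, l ∣ n, r < n/l, and that there exists an r-dimensional F_2-subspace F of F_{2^n} with ∑_{0≠v∈F} 1/v = 0. Then there exists an (l+r)-dimensional F_2-subspace of F_{2^n} over which the inverses sum to zero; consequently, if F_inv is not r-th order sum-free on F_{2^n}, it is not (l+r)-th order sum-free. -/
open scoped Classical

section AuxSumFree

open Polynomial

variable (n l : ℕ)

/-- The subfield F_{2^l} inside F_{2^n}, as a finset. -/
noncomputable def Tset : Finset (GaloisField 2 n) :=
  Finset.univ.filter (fun x => x ^ 2 ^ l = x)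

lemma mem_Tset (x : GaloisField 2 n) : x ∈ Tset n l ↔ x ^ 2 ^ l = x := by
  simp [Tset]

lemma card_GF (hn : n ≠ 0) : Fintype.card (GaloisField 2 n) = 2 ^ n := by
  rw [← Nat.card_eq_fintype_card, GaloisField.card 2 n hn]

lemma Tprod (hn : n ≠ 0) (hl : l ≠ 0) (hln : l ∣ n) :
    ∏ u ∈ Tset n l, (X - C u) = (X ^ 2 ^ l - X : (GaloisField 2 n)[X]) := by
  set K := GaloisField 2 n
  set q := 2 ^ l with hq
  have hq1 : 1 < q := Nat.one_lt_two_pow hl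
  set g : K[X] := X ^ q - X with hg
  have hmonic : g.Monic :=
    monic_X_pow_sub (by rw [degree_X]; exact_mod_cast hq1)
  have hdvd : g ∣ (X ^ 2 ^ n - X : K[X]) := by
    obtain ⟨k, hk⟩ : (2 ^ l - 1) ∣ (2 ^ n - 1) := by
      obtain ⟨m, rfl⟩ := hln
      rw [pow_mul]
      simpa using Nat.sub_dvd_pow_sub_pow (2 ^ l) 1 m
    have h1 : (X : K[X]) ^ (2 ^ l - 1) - 1 ∣ X ^ (2 ^ n - 1) - 1 := by
      rw [hk, pow_mul]
      simpa using sub_dvd_pow_sub_pow ((X : K[X]) ^ (2 ^ l - 1)) 1 k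
    have h2 := mul_dvd_mul_left (X : K[X]) h1
    have e1 : (X : K[X]) * (X ^ (2 ^ l - 1) - 1) = X ^ 2 ^ l - X := by
      rw [mul_sub, mul_one, ← pow_succ', Nat.sub_add_cancel hq1.le]
    have e2 : (X : K[X]) * (X ^ (2 ^ n - 1) - 1) = X ^ 2 ^ n - X := by
      rw [mul_sub, mul_one, ← pow_succ', Nat.sub_add_cancel (Nat.one_le_two_pow)]
    rwa [e1, e2] at h2
  have hsplitbig : Splits (X ^ 2 ^ n - X : K[X]) := by
    rw [splits_iff_card_roots]
    have hc : 2 ^ n = Fintype.card K := (card_GF n hn).symm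
    rw [hc, FiniteField.roots_X_pow_card_sub_X,
      FiniteField.X_pow_card_sub_X_natDegree_eq K Fintype.one_lt_card]
    simp
  have hbigne : (X ^ 2 ^ n - X : K[X]) ≠ 0 := by
    have := FiniteField.X_pow_card_pow_sub_X_ne_zero K hn (one_lt_two)
    simpa using this
  have hsplits : Splits g := Splits.of_dvd hsplitbig hbigne hdvd
  have hsep : g.Separable := galois_poly_separable 2 q (dvd_pow_self 2 hl)
  have hnodup : g.roots.Nodup := nodup_roots hsep
  have hTval : (Tset n l).val = g.roots := by
    have : Tset n l = g.roots.toFinset := by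
      ext x
      rw [mem_Tset, Multiset.mem_toFinset, mem_roots']
      constructor
      · intro h
        refine ⟨hmonic.ne_zero, ?_⟩
        simp only [hg, hq, IsRoot, eval_sub, eval_pow, eval_X, h, sub_self]
      · intro ⟨_, h⟩
        simp only [hg, IsRoot, eval_sub, eval_pow, eval_X] at h
        linear_combination h
    rw [this, Multiset.toFinset_val, Multiset.dedup_eq_self.mpr hnodup]
  have := Splits.eq_prod_roots_of_monic hsplits hmonic
  rw [hg] at this
  rw [Finset.prod, hTval]
  exact this.symm

lemma Tcard (hn : n ≠ 0) (hl : l ≠ 0) (hln : l ∣ n) : (Tset n l).card = 2 ^ l := by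
  have h := congrArg natDegree (Tprod n l hn hl hln)
  rw [natDegree_prod _ _ (fun i _ => X_sub_C_ne_zero i),
    FiniteField.X_pow_card_sub_X_natDegree_eq _ (Nat.one_lt_two_pow hl)] at h
  simpa using h

lemma zero_mem_Tset : (0 : GaloisField 2 n) ∈ Tset n l := by
  rw [mem_Tset]
  exact zero_pow (by positivity)

lemma Tset_mul {x y : GaloisField 2 n} (hx : x ∈ Tset n l) (hy : y ∈ Tset n l) :
    x * y ∈ Tset n l := by
  rw [mem_Tset] at *
  rw [mul_pow, hx, hy]

lemma Tset_inv {x : GaloisField 2 n} (hx : x ∈ Tset n l) : x⁻¹ ∈ Tset n l := by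
  rw [mem_Tset] at *
  rw [inv_pow, hx]

lemma sum_Tset (hn : n ≠ 0) (hl : 2 ≤ l) (hln : l ∣ n) :
    ∑ u ∈ Tset n l, u = 0 := by
  have hcard : (Tset n l).card = 2 ^ l := Tcard n l hn (by omega) hln
  -- find c ∈ T, c ∉ {0, 1}
  have hex : ∃ c ∈ Tset n l, c ≠ 0 ∧ c ≠ 1 := by
    by_contra hc
    push_neg at hc
    have hsub : Tset n l ⊆ {0, 1} := by
      intro x hx
      rcases eq_or_ne x 0 with h | h
      · simp [h]
      · simp [hc x hx h]
    have := Finset.card_le_card hsub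
    have h01 : ({0, 1} : Finset (GaloisField 2 n)).card ≤ 2 := Finset.card_insert_le _ _ |>.trans (by simp)
    have : 2 ^ l ≤ 2 := hcard ▸ this.trans h01
    have : (4 : ℕ) ≤ 2 ^ l := by calc (4:ℕ) = 2^2 := rfl
                                     _ ≤ 2 ^ l := Nat.pow_le_pow_right (by norm_num) hl
    omega
  obtain ⟨c, hcT, hc0, hc1⟩ := hex
  have himg : Finset.image (fun u => c * u) (Tset n l) = Tset n l := by
    apply Finset.eq_of_subset_of_card_le
    · intro x hx
      simp only [Finset.mem_image] at hx
      obtain ⟨u, hu, rfl⟩ := hx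
      exact Tset_mul n l hcT hu
    · rw [Finset.card_image_of_injective _ (mul_right_injective₀ hc0)]
  have h1 : ∑ u ∈ Tset n l, u = ∑ u ∈ Tset n l, c * u := by
    conv_lhs => rw [← himg]
    rw [Finset.sum_image (fun x _ y _ h => mul_left_cancel₀ hc0 h)]
  rw [← Finset.mul_sum] at h1
  have : (c - 1) * ∑ u ∈ Tset n l, u = 0 := by ring_nf; linear_combination -h1
  rcases mul_eq_zero.mp this with h | h
  · exact absurd (sub_eq_zero.mp h) hc1
  · exact h

lemma sum_Tset_inv (hn : n ≠ 0) (hl : 2 ≤ l) (hln : l ∣ n) :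
    ∑ u ∈ (Tset n l).erase 0, u⁻¹ = 0 := by
  have h1 : ∑ u ∈ (Tset n l).erase 0, u⁻¹ = ∑ u ∈ (Tset n l).erase 0, u := by
    apply Finset.sum_nbij' (fun u => u⁻¹) (fun u => u⁻¹)
    · intro u hu
      rw [Finset.mem_erase] at *
      exact ⟨inv_ne_zero hu.1, Tset_inv n l hu.2⟩
    · intro u hu
      rw [Finset.mem_erase] at *
      exact ⟨inv_ne_zero hu.1, Tset_inv n l hu.2⟩
    · intro u _; simp
    · intro u _; simp
    · intro u _; rfl
  rw [h1]
  have := Finset.sum_erase (Tset n l) (f := fun u => u) (a := 0) rfl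
  rw [this]
  exact sum_Tset n l hn hl hln

lemma sum_inv_fiber (hn : n ≠ 0) (hl : l ≠ 0) (hln : l ∣ n)
    (x : GaloisField 2 n) (hx : x ^ 2 ^ l - x ≠ 0) :
    ∑ u ∈ Tset n l, (x - u)⁻¹ = (x ^ 2 ^ l - x)⁻¹ := by
  have hprodpoly := Tprod n l hn hl hln
  have hevalprod : ∏ u ∈ Tset n l, (x - u) = x ^ 2 ^ l - x := by
    have := congrArg (eval x) hprodpoly
    simpa [eval_prod] using this
  have hne : ∀ u ∈ Tset n l, x - u ≠ 0 := by
    intro u hu h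
    apply hx
    rw [← hevalprod]
    exact Finset.prod_eq_zero hu h
  have hq0 : ((2 ^ l : ℕ) : GaloisField 2 n) = 0 := by
    push_cast
    rw [show ((2 : GaloisField 2 n) = 0) from by
      exact_mod_cast CharP.cast_eq_zero (GaloisField 2 n) 2]
    exact zero_pow hl
  have hD : derivative (∏ u ∈ Tset n l, (X - C u)) = (-1 : (GaloisField 2 n)[X]) := by
    rw [hprodpoly, derivative_sub, derivative_X_pow, derivative_X, hq0, map_zero, zero_mul,
      zero_sub]
  have hD2 : ∑ u ∈ Tset n l, ∏ w ∈ (Tset n l).erase u, (x - w) = 1 := by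
    have hder : derivative (∏ u ∈ Tset n l, (X - C u)) =
        ∑ u ∈ Tset n l, ∏ w ∈ (Tset n l).erase u, (X - C w) := by
      rw [Finset.prod, derivative_prod, Finset.sum]
      apply congrArg Multiset.sum
      apply Multiset.map_congr rfl
      intro u _
      simp only [derivative_sub, derivative_X, derivative_C, sub_zero, mul_one]
      rw [Finset.prod, Finset.erase_val]
    have := congrArg (eval x) (hder.symm.trans hD)
    simp only [eval_finset_sum, eval_prod, eval_sub, eval_X, eval_C, eval_neg, eval_one] at this
    rw [this, CharTwo.neg_eq]
  calc ∑ u ∈ Tset n l, (x - u)⁻¹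
      = ∑ u ∈ Tset n l, (∏ w ∈ (Tset n l).erase u, (x - w)) * (x ^ 2 ^ l - x)⁻¹ := by
        apply Finset.sum_congr rfl
        intro u hu
        have hm := Finset.mul_prod_erase (Tset n l) (fun w => x - w) hu
        have hP : (∏ w ∈ (Tset n l).erase u, (x - w)) ≠ 0 :=
          Finset.prod_ne_zero_iff.mpr (fun w hw => hne w (Finset.mem_of_mem_erase hw))
        rw [← hevalprod, ← hm, mul_inv]
        beta_reduce
        rw [mul_comm ((x - u)⁻¹), ← mul_assoc, mul_inv_cancel₀ hP, one_mul]
    _ = (∑ u ∈ Tset n l, ∏ w ∈ (Tset n l).erase u, (x - w)) * (x ^ 2 ^ l - x)⁻¹ := by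
        rw [Finset.sum_mul]
    _ = (x ^ 2 ^ l - x)⁻¹ := by rw [hD2, one_mul]

/-- The F_2-linear map `x ↦ x^(2^l) - x`. -/
noncomputable def Lmap : GaloisField 2 n →ₗ[ZMod 2] GaloisField 2 n :=
  AddMonoidHom.toZModLinearMap 2
    { toFun := fun x => x ^ 2 ^ l - x
      map_zero' := by
        show (0:GaloisField 2 n) ^ 2 ^ l - 0 = 0
        rw [zero_pow (by positivity), sub_zero]
      map_add' := by
        intro x y
        show (x + y) ^ 2 ^ l - (x + y) = (x ^ 2 ^ l - x) + (y ^ 2 ^ l - y)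
        rw [add_pow_char_pow]
        ring }

lemma Lmap_apply (x : GaloisField 2 n) : Lmap n l x = x ^ 2 ^ l - x := rfl

lemma mem_ker_Lmap (x : GaloisField 2 n) :
    x ∈ LinearMap.ker (Lmap n l) ↔ x ∈ Tset n l := by
  rw [LinearMap.mem_ker, Lmap_apply, mem_Tset, sub_eq_zero]

lemma finrank_ker_Lmap (hn : n ≠ 0) (hl : l ≠ 0) (hln : l ∣ n) :
    Module.finrank (ZMod 2) (LinearMap.ker (Lmap n l)) = l := by
  have hcardT : Fintype.card (LinearMap.ker (Lmap n l)) = 2 ^ l := by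
    rw [← Tcard n l hn hl hln, ← Fintype.card_coe]
    exact Fintype.card_congr (Equiv.subtypeEquivRight (mem_ker_Lmap n l))
  have h2 := @Module.card_eq_pow_finrank (ZMod 2) (LinearMap.ker (Lmap n l)) _ _ _ _ _
  rw [hcardT, ZMod.card] at h2
  exact (Nat.pow_right_injective le_rfl h2).symm

lemma finrank_range_Lmap (hn : n ≠ 0) (hl : l ≠ 0) (hln : l ∣ n) :
    Module.finrank (ZMod 2) (LinearMap.range (Lmap n l)) = n - l := by
  have h := LinearMap.finrank_range_add_finrank_ker (Lmap n l)
  rw [finrank_ker_Lmap n l hn hl hln, GaloisField.finrank 2 hn] at h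
  omega

/-- Existence of `a ≠ 0` with `a • F ⊆ range Lmap`. -/
lemma exists_a (hl : 2 ≤ l) (hln : l ∣ n) (r : ℕ) (hr : r < n / l)
    (F : Submodule (ZMod 2) (GaloisField 2 n)) (hF : Module.finrank (ZMod 2) F = r) :
    ∃ a : GaloisField 2 n, a ≠ 0 ∧ ∀ v ∈ F, a * v ∈ LinearMap.range (Lmap n l) := by
  have hl0 : l ≠ 0 := by omega
  have hn : n ≠ 0 := by
    intro h
    rw [h] at hr
    simp at hr
  set K := GaloisField 2 n with hK
  set Q := K ⧸ LinearMap.range (Lmap n l) with hQ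
  have hfinQ : Module.finrank (ZMod 2) Q = l := by
    have := Submodule.finrank_quotient_add_finrank (LinearMap.range (Lmap n l))
    rw [finrank_range_Lmap n l hn hl0 hln, GaloisField.finrank 2 hn] at this
    have hle : l ≤ n := Nat.le_of_dvd (by omega) hln
    show Module.finrank (ZMod 2) (GaloisField 2 n ⧸ LinearMap.range (Lmap n l)) = l
    omega
  -- the bilinear-ish map
  let Φ : K →ₗ[ZMod 2] (F →ₗ[ZMod 2] Q) :=
    { toFun := fun a =>
        { toFun := fun v => Submodule.Quotient.mk (a * v.val)
          map_add' := by
            intro v w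
            simp [mul_add, Submodule.Quotient.mk_add]
          map_smul' := by
            intro c v
            simp only [Submodule.coe_smul, RingHom.id_apply]
            rw [mul_smul_comm]
            exact (Submodule.Quotient.mk_smul _ c _) }
      map_add' := by
        intro a b
        apply LinearMap.ext
        intro v
        simp [add_mul, Submodule.Quotient.mk_add]
      map_smul' := by
        intro c a
        apply LinearMap.ext
        intro v
        simp only [RingHom.id_apply, LinearMap.coe_mk, AddHom.coe_mk, LinearMap.smul_apply]
        rw [smul_mul_assoc]
        exact (Submodule.Quotient.mk_smul _ c _) }
  have hnotinj : ¬ Function.Injective Φ := by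
    intro hinj
    have h1 := LinearMap.finrank_le_finrank_of_injective hinj
    rw [GaloisField.finrank 2 hn, Module.finrank_linearMap, hF, hfinQ] at h1
    -- n ≤ r * l but r < n / l and l ∣ n
    rcases hln with ⟨m, rfl⟩
    rw [Nat.mul_div_cancel_left _ (by omega : 0 < l)] at hr
    have : r * l ≤ (m - 1) * l := Nat.mul_le_mul_right l (by omega)
    have hml : l * m ≤ (m-1) * l := h1.trans this
    rcases Nat.eq_zero_or_pos m with hm | hm
    · omega
    · nlinarith
  rw [← LinearMap.ker_eq_bot] at hnotinj
  obtain ⟨a, haker, ha0⟩ := (Submodule.ne_bot_iff _).mp hnotinj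
  refine ⟨a, ha0, fun v hv => ?_⟩
  have := congrArg (fun f => f ⟨v, hv⟩) (LinearMap.mem_ker.mp haker)
  simp only [LinearMap.coe_mk, AddHom.coe_mk, LinearMap.zero_apply, Φ] at this
  exact (Submodule.Quotient.mk_eq_zero _).mp this

lemma main_construction (hl : 2 ≤ l) (hln : l ∣ n) (r : ℕ) (hr : r < n / l)
    (F : Submodule (ZMod 2) (GaloisField 2 n)) (hF : Module.finrank (ZMod 2) F = r)
    (hsum : (∑ x ∈ Finset.univ.filter (fun x => x ∈ F ∧ x ≠ 0), x⁻¹) = 0) :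
    ∃ E : Submodule (ZMod 2) (GaloisField 2 n),
      Module.finrank (ZMod 2) E = l + r ∧
      (∑ x ∈ Finset.univ.filter (fun x => x ∈ E ∧ x ≠ 0), x⁻¹) = 0 := by
  have hl0 : l ≠ 0 := by omega
  have hn : n ≠ 0 := by
    intro h
    rw [h] at hr
    simp at hr
  obtain ⟨a, ha0, haF⟩ := exists_a n l hl hln r hr F hF
  set mulA : GaloisField 2 n →ₗ[ZMod 2] GaloisField 2 n := LinearMap.mulLeft (ZMod 2) a
    with hmulA
  have hmulA_inj : Function.Injective mulA := by
    intro x y h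
    exact mul_left_cancel₀ ha0 h
  set Fa : Submodule (ZMod 2) (GaloisField 2 n) := Submodule.map mulA F with hFa
  set E : Submodule (ZMod 2) (GaloisField 2 n) := Submodule.comap (Lmap n l) Fa with hE
  have hFa_le : Fa ≤ LinearMap.range (Lmap n l) := by
    rintro w ⟨v, hv, rfl⟩
    exact haF v hv
  refine ⟨E, ?_, ?_⟩
  · -- dimension
    have hFa_rank : Module.finrank (ZMod 2) Fa = r := by
      rw [← hF]
      exact (Submodule.equivMapOfInjective mulA hmulA_inj F).finrank_eq.symm
    have hker_le : LinearMap.ker (Lmap n l) ≤ E := by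
      intro x hx
      rw [LinearMap.mem_ker] at hx
      show Lmap n l x ∈ Fa
      rw [hx]
      exact Fa.zero_mem
    set f : E →ₗ[ZMod 2] Fa := (Lmap n l).restrict (fun x hx => hx) with hf
    have hsurj : Function.Surjective f := by
      rintro ⟨w, hw⟩
      obtain ⟨x, hx⟩ := hFa_le hw
      have hxE : x ∈ E := by
        show Lmap n l x ∈ Fa
        rw [hx]; exact hw
      exact ⟨⟨x, hxE⟩, Subtype.ext hx⟩
    have h1 := LinearMap.finrank_range_add_finrank_ker f
    have h2 : Module.finrank (ZMod 2) (LinearMap.range f) = r := by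
      rw [LinearMap.range_eq_top.mpr hsurj, finrank_top, hFa_rank]
    have h3 : Module.finrank (ZMod 2) (LinearMap.ker f) = l := by
      rw [hf, LinearMap.ker_restrict]
      rw [(Submodule.comapSubtypeEquivOfLe hker_le).finrank_eq]
      exact finrank_ker_Lmap n l hn hl0 hln
    have h4 : Module.finrank (ZMod 2) E = Module.finrank (ZMod 2) E := rfl
    rw [h2, h3] at h1
    omega
  · -- the sum
    set Efin := Finset.univ.filter (fun x => x ∈ E ∧ x ≠ 0) with hEfin
    set Fafin := Finset.univ.filter (fun w => w ∈ Fa) with hFafin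
    have hmaps : ∀ x ∈ Efin, Lmap n l x ∈ Fafin := by
      intro x hx
      rw [hEfin, Finset.mem_filter] at hx
      rw [hFafin, Finset.mem_filter]
      exact ⟨Finset.mem_univ _, hx.2.1⟩
    have hfiber := Finset.sum_fiberwise_of_maps_to hmaps (fun x => x⁻¹)
    rw [← hfiber]
    have h0mem : (0 : GaloisField 2 n) ∈ Fafin := by
      rw [hFafin, Finset.mem_filter]
      exact ⟨Finset.mem_univ _, Fa.zero_mem⟩
    rw [← Finset.insert_erase h0mem, Finset.sum_insert (Finset.notMem_erase _ _)]
    have hzero_fiber : ∑ x ∈ Efin.filter (fun x => Lmap n l x = 0), x⁻¹ = 0 := by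
      have : Efin.filter (fun x => Lmap n l x = 0) = (Tset n l).erase 0 := by
        ext x
        rw [Finset.mem_filter, hEfin, Finset.mem_filter, Finset.mem_erase, ← mem_ker_Lmap,
          LinearMap.mem_ker]
        constructor
        · rintro ⟨⟨_, _, hx0⟩, hLx⟩
          exact ⟨hx0, hLx⟩
        · rintro ⟨hx0, hLx⟩
          refine ⟨⟨Finset.mem_univ _, ?_, hx0⟩, hLx⟩
          show Lmap n l x ∈ Fa
          rw [hLx]
          exact Fa.zero_mem
      rw [this]
      exact sum_Tset_inv n l hn hl hln
    have hpos_fiber : ∀ w ∈ Fafin.erase 0,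
        ∑ x ∈ Efin.filter (fun x => Lmap n l x = w), x⁻¹ = w⁻¹ := by
      intro w hw
      rw [Finset.mem_erase, hFafin, Finset.mem_filter] at hw
      obtain ⟨hw0, _, hwFa⟩ := hw
      obtain ⟨x₀, hx₀⟩ := hFa_le hwFa
      have hfib : Efin.filter (fun x => Lmap n l x = w) =
          (Tset n l).image (fun u => x₀ - u) := by
        ext x
        rw [Finset.mem_filter, hEfin, Finset.mem_filter, Finset.mem_image]
        constructor
        · rintro ⟨-, hLx⟩
          refine ⟨x₀ - x, ?_, by ring⟩
          rw [← mem_ker_Lmap, LinearMap.mem_ker, map_sub, hx₀, hLx, sub_self]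
        · rintro ⟨u, hu, rfl⟩
          rw [← mem_ker_Lmap, LinearMap.mem_ker] at hu
          have hLx : Lmap n l (x₀ - u) = w := by rw [map_sub, hx₀, hu, sub_zero]
          refine ⟨⟨Finset.mem_univ _, ?_, ?_⟩, hLx⟩
          · show Lmap n l (x₀ - u) ∈ Fa
            rw [hLx]; exact hwFa
          · intro h
            rw [h, map_zero] at hLx
            exact hw0 hLx.symm
      rw [hfib, Finset.sum_image (fun x _ y _ h => by
        have := sub_right_injective h; exact this)]
      have hx0ne : x₀ ^ 2 ^ l - x₀ ≠ 0 := by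
        rw [← Lmap_apply, hx₀]
        exact hw0
      rw [sum_inv_fiber n l hn hl0 hln x₀ hx0ne, ← Lmap_apply, hx₀]
    rw [Finset.sum_congr rfl hpos_fiber, hzero_fiber, zero_add]
    -- now sum of w⁻¹ over Fa \ {0}
    have himg : Fafin.erase 0 =
        (Finset.univ.filter (fun v => v ∈ F ∧ v ≠ 0)).image (fun v => a * v) := by
      ext w
      rw [Finset.mem_erase, hFafin, Finset.mem_filter, Finset.mem_image]
      constructor
      · rintro ⟨hw0, -, v, hv, rfl⟩
        refine ⟨v, ?_, rfl⟩
        rw [Finset.mem_filter]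
        refine ⟨Finset.mem_univ _, hv, ?_⟩
        intro h
        rw [hmulA] at *
        apply hw0
        show a * v = 0
        rw [h, mul_zero]
      · rintro ⟨v, hv, rfl⟩
        rw [Finset.mem_filter] at hv
        obtain ⟨-, hvF, hv0⟩ := hv
        exact ⟨mul_ne_zero ha0 hv0, Finset.mem_univ _, ⟨v, hvF, rfl⟩⟩
    rw [himg, Finset.sum_image (fun x _ y _ h => mul_left_cancel₀ ha0 h)]
    have : ∀ v ∈ Finset.univ.filter (fun v => v ∈ F ∧ v ≠ 0), (a * v)⁻¹ = a⁻¹ * v⁻¹ := by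
      intro v _
      rw [mul_inv]
    rw [Finset.sum_congr rfl this, ← Finset.mul_sum, hsum, mul_zero]

end AuxSumFree

/-- Assume `l ≥ 2`, `l ∣ n`, `r < n/l`, and that there is an `r`-dimensional
`F_2`-subspace `F` of `F_{2^n}` over which the inverses sum to zero. Then there is an
`(l+r)`-dimensional `F_2`-subspace over which the inverses sum to zero; consequently, if
`F_inv` is not `r`-th order sum-free, it is not `(l+r)`-th order sum-free. -/
theorem subspace_dim_add (n l r : ℕ) (hl : 2 ≤ l) (hln : l ∣ n) (hr : r < n / l)
    (F : Submodule (ZMod 2) (GaloisField 2 n)) (hF : Module.finrank (ZMod 2) F = r)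
    (hsum : (∑ x ∈ Finset.univ.filter (fun x => x ∈ F ∧ x ≠ 0), x⁻¹) = 0) :
    (∃ E : Submodule (ZMod 2) (GaloisField 2 n),
        Module.finrank (ZMod 2) E = l + r ∧
        (∑ x ∈ Finset.univ.filter (fun x => x ∈ E ∧ x ≠ 0), x⁻¹) = 0) ∧
    (¬ KthOrderSumFree n r (fun x => x ^ (2 ^ n - 2)) →
      ¬ KthOrderSumFree n (l + r) (fun x => x ^ (2 ^ n - 2))) := by
  have hn : n ≠ 0 := by
    intro h
    rw [h] at hr
    simp at hr
  obtain ⟨E, hErank, hEsum⟩ := main_construction n l hl hln r hr F hF hsum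
  have h4 : 4 ≤ 2 ^ n := by
    have hn2 : 2 ≤ n := le_trans hl (Nat.le_of_dvd (by omega) hln)
    calc (4:ℕ) = 2 ^ 2 := rfl
    _ ≤ 2 ^ n := Nat.pow_le_pow_right (by norm_num) hn2
  refine ⟨⟨E, hErank, hEsum⟩, ?_⟩
  intro _ hKO
  apply hKO 0 E hErank
  have hsplit : Finset.univ.filter (fun x => x ∈ E) =
      insert (0 : GaloisField 2 n) (Finset.univ.filter (fun x => x ∈ E ∧ x ≠ 0)) := by
    ext x
    simp only [Finset.mem_filter, Finset.mem_insert, Finset.mem_univ, true_and]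
    constructor
    · intro hx
      rcases eq_or_ne x 0 with h | h
      · exact Or.inl h
      · exact Or.inr ⟨hx, h⟩
    · rintro (rfl | ⟨hx, -⟩)
      · exact E.zero_mem
      · exact hx
  have h0not : (0 : GaloisField 2 n) ∉ Finset.univ.filter
      (fun x => x ∈ E ∧ x ≠ 0) := by simp
  rw [hsplit, Finset.sum_insert h0not]
  simp only [zero_add]
  rw [zero_pow (by omega : 2 ^ n - 2 ≠ 0)]
  have hpow : ∀ x ∈ Finset.univ.filter (fun x => x ∈ E ∧ x ≠ 0),
      x ^ (2 ^ n - 2) = x⁻¹ := by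
    intro x hx
    rw [Finset.mem_filter] at hx
    obtain ⟨-, -, hx0⟩ := hx
    apply eq_inv_of_mul_eq_one_left
    rw [← pow_succ, (by omega : 2 ^ n - 2 + 1 = 2 ^ n - 1), ← card_GF n hn]
    exact FiniteField.pow_card_sub_one_eq_one x hx0
  rw [Finset.sum_congr rfl hpow, hEsum, add_zero]
end
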